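/- arXiv:1306.5167 — 6 statements merged into one kernel-verified Lean document; each statement's English description precedes it below -/
import Mathlib

section
/- For all integers a, b with 1 ≤ a ≤ b and every natural number n, the Turán number of the complete bipartite graph satisfies ext(n, K_{a,b}) ≤ (1/2)·(b−1)^{1/a}·n^{2−1/a} + ((a−1)/2)·n. -/
open Finset SimpleGraph

/-- `G` contains a copy of `H`, i.e. a subgraph isomorphic to `H`. -/
def SimpleGraph.ContainsCopy {α β : Type*} (G : SimpleGraph α) (H : SimpleGraph β) : Prop :=
  ∃ f : β ↪ α, ∀ u v, H.Adj u v → G.Adj (f u) (f v)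

/-- The number of edges of a simple graph on a finite vertex set. -/
noncomputable def edgeCount {V : Type*} [Fintype V] (G : SimpleGraph V) : ℕ :=
  G.edgeSet.ncard

/-- The Turán number `ext(n, H)`: the maximum number of edges of a simple graph on
`n` vertices containing no subgraph isomorphic to `H`. -/
noncomputable def extNum {β : Type*} (n : ℕ) (H : SimpleGraph β) : ℕ :=
  sSup {e | ∃ G : SimpleGraph (Fin n), ¬ G.ContainsCopy H ∧ e = edgeCount G}

section KST

variable {n a b : ℕ}

/-- If `G` is `K_{a,b}`-free, any `a`-set has at most `b-1` common neighbors. -/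
lemma common_nbrs_le (G : SimpleGraph (Fin n)) [DecidableRel G.Adj] (hb : 1 ≤ b)
    (hfree : ¬ G.ContainsCopy (completeBipartiteGraph (Fin a) (Fin b)))
    (S : Finset (Fin n)) (hS : S.card = a) :
    (univ.filter (fun v => S ⊆ G.neighborFinset v)).card ≤ b - 1 := by
  by_contra h
  push_neg at h
  have hble : b ≤ (univ.filter (fun v => S ⊆ G.neighborFinset v)).card := by omega
  obtain ⟨T, hTsub, hT⟩ := Finset.exists_subset_card_eq hble
  have hmem : ∀ v ∈ T, S ⊆ G.neighborFinset v := fun v hv => (mem_filter.1 (hTsub hv)).2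
  have hdisj : ∀ x, x ∈ S → x ∈ T → False := by
    intro x hxS hxT
    exact G.irrefl (G.mem_neighborFinset x x |>.1 (hmem x hxT hxS))
  let eS : Fin a ≃ S := (S.equivFin.trans (finCongr hS)).symm
  let eT : Fin b ≃ T := (T.equivFin.trans (finCongr hT)).symm
  let f : Fin a ⊕ Fin b → Fin n := Sum.elim (fun i => (eS i : Fin n)) (fun j => (eT j : Fin n))
  have hfl : ∀ i : Fin a, f (Sum.inl i) = (eS i : Fin n) := fun _ => rfl
  have hfr : ∀ j : Fin b, f (Sum.inr j) = (eT j : Fin n) := fun _ => rfl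
  have finj : Function.Injective f := by
    intro u v huv
    rcases u with i | i <;> rcases v with j | j
    · rw [hfl, hfl] at huv
      have h2 : eS i = eS j := Subtype.ext huv
      rw [Equiv.apply_eq_iff_eq] at h2
      rw [h2]
    · rw [hfl, hfr] at huv
      exact absurd ((eT j).2) (fun h2 => hdisj _ (huv ▸ (eS i).2) h2)
    · rw [hfr, hfl] at huv
      exact absurd ((eT i).2) (fun h2 => hdisj _ (huv.symm ▸ (eS j).2) h2)
    · rw [hfr, hfr] at huv
      have h2 : eT i = eT j := Subtype.ext huv
      rw [Equiv.apply_eq_iff_eq] at h2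
      rw [h2]
  have hadj : ∀ u v, (completeBipartiteGraph (Fin a) (Fin b)).Adj u v → G.Adj (f u) (f v) := by
    intro u v huv
    rcases u with i | i <;> rcases v with j | j
    · exact absurd huv (by simp)
    · rw [hfl, hfr]
      exact ((G.mem_neighborFinset _ _).1 (hmem _ (eT j).2 (eS i).2)).symm
    · rw [hfr, hfl]
      exact (G.mem_neighborFinset _ _).1 (hmem _ (eT i).2 (eS j).2)
    · exact absurd huv (by simp)
  exact hfree ⟨⟨f, finj⟩, hadj⟩

lemma sum_choose_le (G : SimpleGraph (Fin n)) [DecidableRel G.Adj] (hb : 1 ≤ b)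
    (hfree : ¬ G.ContainsCopy (completeBipartiteGraph (Fin a) (Fin b))) :
    ∑ v : Fin n, (G.degree v).choose a ≤ (b - 1) * n.choose a := by
  calc ∑ v : Fin n, (G.degree v).choose a
      = ∑ v : Fin n, ∑ S ∈ (univ : Finset (Fin n)).powersetCard a,
          if S ⊆ G.neighborFinset v then 1 else 0 := by
        refine sum_congr rfl fun v _ => ?_
        rw [← Finset.card_filter]
        have hset : ((univ : Finset (Fin n)).powersetCard a).filter
            (fun S => S ⊆ G.neighborFinset v) = (G.neighborFinset v).powersetCard a := by
          ext S
          simp only [Finset.mem_filter, Finset.mem_powersetCard, Finset.subset_univ, true_and]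
          tauto
        rw [hset, Finset.card_powersetCard, ← SimpleGraph.card_neighborFinset_eq_degree]
    _ = ∑ S ∈ (univ : Finset (Fin n)).powersetCard a,
          (univ.filter (fun v => S ⊆ G.neighborFinset v)).card := by
        rw [Finset.sum_comm]
        exact Finset.sum_congr rfl fun S _ => (Finset.card_filter _ _).symm
    _ ≤ ∑ _S ∈ (univ : Finset (Fin n)).powersetCard a, (b - 1) :=
        Finset.sum_le_sum fun S hS =>
          common_nbrs_le G hb hfree S (Finset.mem_powersetCard.1 hS).2
    _ = n.choose a * (b - 1) := by
        simp [Finset.card_powersetCard]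
    _ = (b - 1) * n.choose a := mul_comm _ _

lemma sum_pow_le (G : SimpleGraph (Fin n)) [DecidableRel G.Adj] (hb : 1 ≤ b)
    (hfree : ¬ G.ContainsCopy (completeBipartiteGraph (Fin a) (Fin b))) :
    ∑ v : Fin n, (G.degree v + 1 - a) ^ a ≤ (b - 1) * n ^ a := by
  calc ∑ v : Fin n, (G.degree v + 1 - a) ^ a
      ≤ ∑ v : Fin n, (G.degree v).descFactorial a :=
        Finset.sum_le_sum fun v _ => Nat.pow_sub_le_descFactorial _ _
    _ = a.factorial * ∑ v : Fin n, (G.degree v).choose a := by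
        rw [Finset.mul_sum]
        exact Finset.sum_congr rfl fun v _ => Nat.descFactorial_eq_factorial_mul_choose _ _
    _ ≤ a.factorial * ((b - 1) * n.choose a) :=
        Nat.mul_le_mul_left _ (sum_choose_le G hb hfree)
    _ = (b - 1) * (a.factorial * n.choose a) := by ring
    _ = (b - 1) * n.descFactorial a := by
        rw [Nat.descFactorial_eq_factorial_mul_choose]
    _ ≤ (b - 1) * n ^ a := Nat.mul_le_mul_left _ (Nat.descFactorial_le_pow _ _)

lemma edge_bound (G : SimpleGraph (Fin n)) [DecidableRel G.Adj]
    (ha : 1 ≤ a) (hab : a ≤ b)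
    (hfree : ¬ G.ContainsCopy (completeBipartiteGraph (Fin a) (Fin b))) :
    (G.edgeFinset.card : ℝ) ≤
      1 / 2 * ((b : ℝ) - 1) ^ ((1 : ℝ) / a) * (n : ℝ) ^ (2 - (1 : ℝ) / a)
        + ((a : ℝ) - 1) / 2 * n := by
  have hb : 1 ≤ b := le_trans ha hab
  have ha0 : (a : ℝ) ≠ 0 := Nat.cast_ne_zero.2 (by omega)
  have haR : (1 : ℝ) ≤ a := by exact_mod_cast ha
  have hbR : (0 : ℝ) ≤ (b : ℝ) - 1 := by
    have : (1 : ℝ) ≤ b := by exact_mod_cast hb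
    linarith
  have hC0 : (0 : ℝ) ≤ ((b : ℝ) - 1) ^ ((1 : ℝ) / a) * (n : ℝ) ^ (2 - (1 : ℝ) / a) := by
    positivity
  -- handle n = 0
  rcases Nat.eq_zero_or_pos n with hn | hn
  · subst hn
    have h2 := G.sum_degrees_eq_twice_card_edges
    rw [Finset.univ_eq_empty, Finset.sum_empty] at h2
    have he : G.edgeFinset.card = 0 := by omega
    rw [he]
    simp only [Nat.cast_zero, mul_zero]
    rw [Real.zero_rpow (by
      have h3 : (1 : ℝ) / a ≤ 1 := by
        rw [div_le_one (by positivity)]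
        exact haR
      intro h4; linarith)]
    norm_num
  have hnR : (0 : ℝ) < n := by exact_mod_cast hn
  have hsumdeg : ∑ v : Fin n, (G.degree v : ℝ) = 2 * G.edgeFinset.card := by
    exact_mod_cast congrArg (Nat.cast : ℕ → ℝ) G.sum_degrees_eq_twice_card_edges
  have hxge : ∀ d : ℕ, (d : ℝ) - ((a : ℝ) - 1) ≤ ((d + 1 - a : ℕ) : ℝ) := by
    intro d
    rcases le_or_gt a (d + 1) with h | h
    · rw [Nat.cast_sub h]
      push_cast
      linarith
    · have h2 : d + 1 - a = 0 := by omega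
      have h3 : (d : ℝ) + 1 ≤ a := by exact_mod_cast h.le
      rw [h2]
      simp only [Nat.cast_zero]
      linarith
  have hXsum : 2 * (G.edgeFinset.card : ℝ) - ((a : ℝ) - 1) * n
      ≤ ∑ v : Fin n, ((G.degree v + 1 - a : ℕ) : ℝ) := by
    have h1 : ∑ v : Fin n, ((G.degree v : ℝ) - ((a : ℝ) - 1))
        ≤ ∑ v : Fin n, ((G.degree v + 1 - a : ℕ) : ℝ) :=
      Finset.sum_le_sum fun v _ => hxge (G.degree v)
    rw [Finset.sum_sub_distrib, hsumdeg, Finset.sum_const, Finset.card_univ,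
      Fintype.card_fin, nsmul_eq_mul, mul_comm] at h1
    linarith
  have hpow : ∑ v : Fin n, ((G.degree v + 1 - a : ℕ) : ℝ) ^ a
      ≤ ((b : ℝ) - 1) * (n : ℝ) ^ a := by
    have h1 := sum_pow_le G hb hfree
    have h2 : ((∑ v : Fin n, (G.degree v + 1 - a) ^ a : ℕ) : ℝ)
        ≤ (((b - 1) * n ^ a : ℕ) : ℝ) := by exact_mod_cast h1
    rw [Nat.cast_mul, Nat.cast_sub hb, Nat.cast_sum] at h2
    push_cast at h2 ⊢
    exact h2
  have hJ : (∑ v : Fin n, ((G.degree v + 1 - a : ℕ) : ℝ)) ^ a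
      ≤ ((b : ℝ) - 1) * (n : ℝ) ^ (2 * a - 1) := by
    obtain ⟨a', rfl⟩ : ∃ a', a = a' + 1 := ⟨a - 1, by omega⟩
    have hJ0 := pow_sum_div_card_le_sum_pow (s := (univ : Finset (Fin n)))
      (f := fun v => ((G.degree v + 1 - (a' + 1) : ℕ) : ℝ)) (fun v _ => Nat.cast_nonneg _) a'
    rw [Finset.card_univ, Fintype.card_fin, div_le_iff₀ (by positivity)] at hJ0
    calc (∑ v : Fin n, ((G.degree v + 1 - (a' + 1) : ℕ) : ℝ)) ^ (a' + 1)
        ≤ (∑ v : Fin n, ((G.degree v + 1 - (a' + 1) : ℕ) : ℝ) ^ (a' + 1)) * (n : ℝ) ^ a' := hJ0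
      _ ≤ (((b : ℝ) - 1) * (n : ℝ) ^ (a' + 1)) * (n : ℝ) ^ a' :=
          mul_le_mul_of_nonneg_right hpow (by positivity)
      _ = ((b : ℝ) - 1) * (n : ℝ) ^ (2 * (a' + 1) - 1) := by
          rw [mul_assoc, ← pow_add]
          congr 2
          omega
  set y : ℝ := 2 * (G.edgeFinset.card : ℝ) - ((a : ℝ) - 1) * n with hy
  have key : y ≤ ((b : ℝ) - 1) ^ ((1 : ℝ) / a) * (n : ℝ) ^ (2 - (1 : ℝ) / a) := by
    rcases le_or_gt y 0 with h | h
    · linarith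
    · have hya : y ^ a ≤ ((b : ℝ) - 1) * (n : ℝ) ^ (2 * a - 1) :=
        le_trans (pow_le_pow_left₀ h.le hXsum a) hJ
      have h1 : y = (y ^ a) ^ ((1 : ℝ) / a) := by
        rw [← Real.rpow_natCast y a, ← Real.rpow_mul h.le, mul_one_div, div_self ha0,
          Real.rpow_one]
      rw [h1]
      have h2 : (y ^ a) ^ ((1 : ℝ) / a)
          ≤ (((b : ℝ) - 1) * (n : ℝ) ^ (2 * a - 1)) ^ ((1 : ℝ) / a) :=
        Real.rpow_le_rpow (by positivity) hya (by positivity)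
      refine h2.trans (le_of_eq ?_)
      rw [Real.mul_rpow hbR (by positivity)]
      congr 1
      rw [← Real.rpow_natCast (n : ℝ) (2 * a - 1), ← Real.rpow_mul hnR.le]
      congr 1
      have hcast : ((2 * a - 1 : ℕ) : ℝ) = 2 * (a : ℝ) - 1 := by
        have h3 : 1 ≤ 2 * a := by omega
        rw [Nat.cast_sub h3]
        push_cast
        ring
      rw [hcast]
      field_simp
  rw [hy] at key
  linarith

end KST

/-- Kővári–T. Sós–Turán: for `1 ≤ a ≤ b`,
`ext(n, K_{a,b}) ≤ (1/2)·(b−1)^{1/a}·n^{2−1/a} + ((a−1)/2)·n`. -/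
theorem kovari_sos_turan (a b : ℕ) (ha : 1 ≤ a) (hab : a ≤ b) (n : ℕ) :
    (extNum n (completeBipartiteGraph (Fin a) (Fin b)) : ℝ) ≤
      1 / 2 * ((b : ℝ) - 1) ^ ((1 : ℝ) / a) * (n : ℝ) ^ (2 - (1 : ℝ) / a)
        + ((a : ℝ) - 1) / 2 * n := by
  classical
  have hne : {e | ∃ G : SimpleGraph (Fin n),
      ¬ G.ContainsCopy (completeBipartiteGraph (Fin a) (Fin b)) ∧ e = edgeCount G}.Nonempty := by
    refine ⟨edgeCount (⊥ : SimpleGraph (Fin n)), ⊥, ?_, rfl⟩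
    rintro ⟨f, hf⟩
    exact hf (Sum.inl ⟨0, ha⟩) (Sum.inr ⟨0, le_trans ha hab⟩) (by simp)
  have hbdd : BddAbove {e | ∃ G : SimpleGraph (Fin n),
      ¬ G.ContainsCopy (completeBipartiteGraph (Fin a) (Fin b)) ∧ e = edgeCount G} := by
    refine ⟨Fintype.card (Sym2 (Fin n)), ?_⟩
    rintro e ⟨G, _, rfl⟩
    have hec : edgeCount G = G.edgeFinset.card := by
      rw [edgeCount, Set.ncard_eq_toFinset_card']
      congr 1
    rw [hec]
    exact Finset.card_le_univ _
  obtain ⟨G, hfree, hval⟩ := Nat.sSup_mem hne hbdd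
  have hext : extNum n (completeBipartiteGraph (Fin a) (Fin b)) = edgeCount G := hval
  have hec : edgeCount G = G.edgeFinset.card := by
    rw [edgeCount, Set.ncard_eq_toFinset_card']
    congr 1
  rw [hext, hec]
  exact edge_bound G ha hab hfree
end

section
/- For all integers a, b ≥ 1 and all integers m, n ≥ 1, the Zarankiewicz number satisfies Z(m, n, a, b) ≤ (b−1)^{1/a}·m·n^{1−1/a} + (a−1)·n. -/
open Finset SimpleGraph

namespace KSTAux

variable {m n a b : ℕ}

lemma count_eq (M : Fin m → Fin n → Bool) :
    (Finset.univ.filter fun p : Fin m × Fin n => M p.1 p.2 = true).card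
      = ∑ j : Fin n, (Finset.univ.filter fun i => M i j = true).card := by
  rw [Finset.card_filter, ← Finset.univ_product_univ, Finset.sum_product_right]
  simp only [Finset.card_filter]

lemma double_count (hb : 1 ≤ b) (M : Fin m → Fin n → Bool)
    (hM : ¬ ∃ (R : Finset (Fin m)) (C : Finset (Fin n)), R.card = a ∧ C.card = b ∧
        ∀ i ∈ R, ∀ j ∈ C, M i j = true) :
    ∑ j : Fin n, ((Finset.univ.filter fun i => M i j = true).card.choose a)
      ≤ (b - 1) * m.choose a := by
  set col : Fin n → Finset (Fin m) := fun j => Finset.univ.filter fun i => M i j = true with hcol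
  have h1 : ∀ j : Fin n, (col j).card.choose a
      = ∑ A ∈ (Finset.univ : Finset (Fin m)).powersetCard a, if A ⊆ col j then 1 else 0 := by
    intro j
    have h2 : ((Finset.univ : Finset (Fin m)).powersetCard a).filter (fun A => A ⊆ col j)
        = (col j).powersetCard a := by
      ext A
      simp only [Finset.mem_filter, Finset.mem_powersetCard, Finset.subset_univ, true_and]
      tauto
    rw [← Finset.card_powersetCard, ← h2, Finset.card_filter]
  calc ∑ j : Fin n, (col j).card.choose a
      = ∑ j : Fin n, ∑ A ∈ (Finset.univ : Finset (Fin m)).powersetCard a,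
          if A ⊆ col j then 1 else 0 := Finset.sum_congr rfl (fun j _ => h1 j)
    _ = ∑ A ∈ (Finset.univ : Finset (Fin m)).powersetCard a, ∑ j : Fin n,
          if A ⊆ col j then 1 else 0 := Finset.sum_comm
    _ ≤ ∑ _A ∈ (Finset.univ : Finset (Fin m)).powersetCard a, (b - 1) := by
        apply Finset.sum_le_sum
        intro A hA
        rw [← Finset.card_filter]
        by_contra hc
        push_neg at hc
        have hble : b ≤ (Finset.univ.filter fun j => A ⊆ col j).card := by omega
        obtain ⟨C, hCsub, hCcard⟩ := Finset.exists_subset_card_eq hble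
        refine hM ⟨A, C, (Finset.mem_powersetCard.mp hA).2, hCcard, fun i hi j hj => ?_⟩
        have hj' := hCsub hj
        simp only [Finset.mem_filter, Finset.mem_univ, true_and] at hj'
        have := hj' hi
        simpa [hcol] using this
    _ = (b - 1) * m.choose a := by
        simp [Finset.card_powersetCard, mul_comm]

lemma nat_key (hb : 1 ≤ b) (M : Fin m → Fin n → Bool)
    (hM : ¬ ∃ (R : Finset (Fin m)) (C : Finset (Fin n)), R.card = a ∧ C.card = b ∧
        ∀ i ∈ R, ∀ j ∈ C, M i j = true) :
    ∑ j : Fin n, ((Finset.univ.filter fun i => M i j = true).card + 1 - a) ^ a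
      ≤ (b - 1) * m ^ a := by
  set c : Fin n → ℕ := fun j => (Finset.univ.filter fun i => M i j = true).card with hc
  calc ∑ j : Fin n, (c j + 1 - a) ^ a
      ≤ ∑ j : Fin n, (c j).descFactorial a :=
        Finset.sum_le_sum fun j _ => Nat.pow_sub_le_descFactorial _ _
    _ = ∑ j : Fin n, Nat.factorial a * (c j).choose a := by
        simp [Nat.descFactorial_eq_factorial_mul_choose]
    _ = Nat.factorial a * ∑ j : Fin n, (c j).choose a := by rw [Finset.mul_sum]
    _ ≤ Nat.factorial a * ((b - 1) * m.choose a) :=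
        Nat.mul_le_mul_left _ (double_count hb M hM)
    _ = (b - 1) * (Nat.factorial a * m.choose a) := by ring
    _ = (b - 1) * m.descFactorial a := by rw [Nat.descFactorial_eq_factorial_mul_choose]
    _ ≤ (b - 1) * m ^ a := Nat.mul_le_mul_left _ (Nat.descFactorial_le_pow _ _)


lemma real_bound {m n a b : ℕ} (ha : 1 ≤ a) (hb : 1 ≤ b) (hm : 1 ≤ m) (hn : 1 ≤ n)
    (M : Fin m → Fin n → Bool)
    (hM : ¬ ∃ (R : Finset (Fin m)) (C : Finset (Fin n)), R.card = a ∧ C.card = b ∧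
        ∀ i ∈ R, ∀ j ∈ C, M i j = true) :
    ((Finset.univ.filter fun p : Fin m × Fin n => M p.1 p.2 = true).card : ℝ) ≤
      ((b : ℝ) - 1) ^ ((1 : ℝ) / a) * m * (n : ℝ) ^ (1 - (1 : ℝ) / a)
        + ((a : ℝ) - 1) * n := by
  set c : Fin n → ℕ := fun j => (Finset.univ.filter fun i => M i j = true).card with hc
  set t : Fin n → ℝ := fun j => ((c j + 1 - a : ℕ) : ℝ) with ht
  set k : ℕ := (Finset.univ.filter fun p : Fin m × Fin n => M p.1 p.2 = true).card with hkdef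
  have ha' : (0:ℝ) < a := by exact_mod_cast Nat.lt_of_lt_of_le Nat.zero_lt_one ha
  have hb1 : (0:ℝ) ≤ (b:ℝ) - 1 := by
    have : (1:ℝ) ≤ b := by exact_mod_cast hb
    linarith
  have ha1 : (0:ℝ) ≤ (a:ℝ) - 1 := by
    have : (1:ℝ) ≤ a := by exact_mod_cast ha
    linarith
  have hn0 : (0:ℝ) < n := by exact_mod_cast Nat.lt_of_lt_of_le Nat.zero_lt_one hn
  have hm0 : (0:ℝ) ≤ m := Nat.cast_nonneg m
  have hterm1 : 0 ≤ ((b : ℝ) - 1) ^ ((1 : ℝ) / a) * m * (n : ℝ) ^ (1 - (1 : ℝ) / a) := by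
    apply mul_nonneg (mul_nonneg (Real.rpow_nonneg hb1 _) hm0) (Real.rpow_nonneg hn0.le _)
  have hk : (k:ℝ) = ∑ j : Fin n, (c j : ℝ) := by
    rw [hkdef, count_eq M]
    push_cast
    rfl
  have ht_low : ∀ j : Fin n, (c j : ℝ) - ((a:ℝ) - 1) ≤ t j := by
    intro j
    rcases le_or_gt a (c j + 1) with h | h
    · have : t j = ((c j + 1 - a : ℕ) : ℝ) := rfl
      rw [this, Nat.cast_sub h]
      push_cast
      linarith
    · have h0 : c j + 1 - a = 0 := Nat.sub_eq_zero_of_le h.le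
      have hle : (c j : ℝ) + 1 ≤ a := by exact_mod_cast h.le
      have : t j = ((c j + 1 - a : ℕ) : ℝ) := rfl
      rw [this, h0]
      simp
      linarith
  have hS : (k:ℝ) - ((a:ℝ) - 1) * n ≤ ∑ j : Fin n, t j := by
    have h1 := Finset.sum_le_sum (fun j (_ : j ∈ Finset.univ) => ht_low j)
    have h2 : ∑ j : Fin n, ((c j : ℝ) - ((a:ℝ) - 1))
        = (∑ j : Fin n, (c j : ℝ)) - ((a:ℝ) - 1) * n := by
      rw [Finset.sum_sub_distrib, Finset.sum_const, Finset.card_univ, Fintype.card_fin]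
      ring
    rw [h2, ← hk] at h1
    exact h1
  have hT0 : ∀ j ∈ (Finset.univ : Finset (Fin n)), (0:ℝ) ≤ t j := fun j _ => Nat.cast_nonneg _
  have hPM : (∑ j : Fin n, t j) ^ a ≤ (n:ℝ) ^ (a - 1) * ∑ j : Fin n, t j ^ a := by
    have h1 := pow_sum_div_card_le_sum_pow hT0 (a - 1)
    rw [Nat.sub_add_cancel ha, Finset.card_univ, Fintype.card_fin,
      div_le_iff₀ (by positivity)] at h1
    calc (∑ j : Fin n, t j) ^ a ≤ (∑ j : Fin n, t j ^ a) * (n:ℝ) ^ (a-1) := h1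
      _ = (n:ℝ) ^ (a - 1) * ∑ j : Fin n, t j ^ a := by ring
  have hsum_pow : ∑ j : Fin n, t j ^ a ≤ ((b:ℝ) - 1) * (m:ℝ) ^ a := by
    have hnat := nat_key hb M hM
    have hcast : ((∑ j : Fin n, (c j + 1 - a) ^ a : ℕ) : ℝ)
        ≤ (((b - 1) * m ^ a : ℕ) : ℝ) := Nat.cast_le.mpr hnat
    have hL : ((∑ j : Fin n, (c j + 1 - a) ^ a : ℕ) : ℝ) = ∑ j : Fin n, t j ^ a := by
      rw [Nat.cast_sum]
      exact Finset.sum_congr rfl (fun j _ => by rw [Nat.cast_pow])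
    have hR : (((b - 1) * m ^ a : ℕ) : ℝ) = ((b:ℝ) - 1) * (m:ℝ) ^ a := by
      push_cast [Nat.cast_sub hb]
      ring
    rw [hL, hR] at hcast
    exact hcast
  rcases le_or_gt (k:ℝ) (((a:ℝ) - 1) * n) with h | h
  · linarith
  · have hX : (0:ℝ) < (k:ℝ) - ((a:ℝ) - 1) * n := by linarith
    set X : ℝ := (k:ℝ) - ((a:ℝ) - 1) * n with hXdef
    have hXa : X ^ a ≤ ((b:ℝ) - 1) * (m:ℝ) ^ a * (n:ℝ) ^ (a - 1) := by
      calc X ^ a ≤ (∑ j : Fin n, t j) ^ a := pow_le_pow_left₀ hX.le hS a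
        _ ≤ (n:ℝ) ^ (a - 1) * ∑ j : Fin n, t j ^ a := hPM
        _ ≤ (n:ℝ) ^ (a - 1) * (((b:ℝ) - 1) * (m:ℝ) ^ a) :=
            mul_le_mul_of_nonneg_left hsum_pow (by positivity)
        _ = ((b:ℝ) - 1) * (m:ℝ) ^ a * (n:ℝ) ^ (a - 1) := by ring
    have hYnn : (0:ℝ) ≤ ((b:ℝ) - 1) * (m:ℝ) ^ a * (n:ℝ) ^ (a - 1) :=
      mul_nonneg (mul_nonneg hb1 (by positivity)) (by positivity)
    have key : X ≤ (((b:ℝ) - 1) * (m:ℝ) ^ a * (n:ℝ) ^ (a - 1)) ^ ((1:ℝ)/a) := by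
      have h1 : X = (X ^ a) ^ ((1:ℝ)/a) := by
        rw [← Real.rpow_natCast X a, ← Real.rpow_mul hX.le, mul_one_div,
          div_self (ne_of_gt ha'), Real.rpow_one]
      rw [h1]
      exact Real.rpow_le_rpow (by positivity) hXa (by positivity)
    have hsplit : (((b:ℝ) - 1) * (m:ℝ) ^ a * (n:ℝ) ^ (a - 1)) ^ ((1:ℝ)/a)
        = ((b:ℝ) - 1) ^ ((1:ℝ)/a) * m * (n:ℝ) ^ (1 - (1:ℝ)/a) := by
      rw [Real.mul_rpow (mul_nonneg hb1 (by positivity)) (by positivity),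
        Real.mul_rpow hb1 (by positivity)]
      congr 1
      · congr 1
        rw [← Real.rpow_natCast (m:ℝ) a, ← Real.rpow_mul hm0, mul_one_div,
          div_self (ne_of_gt ha'), Real.rpow_one]
      · rw [← Real.rpow_natCast (n:ℝ) (a - 1), ← Real.rpow_mul hn0.le]
        congr 1
        rw [Nat.cast_sub ha, Nat.cast_one]
        field_simp
    rw [hsplit] at key
    linarith

end KSTAux

/-- The Zarankiewicz number `Z(m,n,a,b)`: the maximum number of `1` entries in an
`m × n` 0-1 matrix containing no `a × b` all-ones submatrix. -/
noncomputable def zarankiewicz (m n a b : ℕ) : ℕ :=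
  sSup {k | ∃ M : Fin m → Fin n → Bool,
    (¬ ∃ (R : Finset (Fin m)) (C : Finset (Fin n)), R.card = a ∧ C.card = b ∧
        ∀ i ∈ R, ∀ j ∈ C, M i j = true) ∧
    k = (Finset.univ.filter fun p : Fin m × Fin n => M p.1 p.2 = true).card}

/-- Kővári–T. Sós–Turán bound for the Zarankiewicz problem:
`Z(m,n,a,b) ≤ (b−1)^{1/a}·m·n^{1−1/a} + (a−1)·n`. -/
theorem kst_zarankiewicz (a b m n : ℕ) (ha : 1 ≤ a) (hb : 1 ≤ b)
    (hm : 1 ≤ m) (hn : 1 ≤ n) :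
    (_root_.zarankiewicz m n a b : ℝ) ≤
      ((b : ℝ) - 1) ^ ((1 : ℝ) / a) * m * (n : ℝ) ^ (1 - (1 : ℝ) / a)
        + ((a : ℝ) - 1) * n := by
  have hb1 : (0:ℝ) ≤ (b:ℝ) - 1 := by
    have : (1:ℝ) ≤ b := by exact_mod_cast hb
    linarith
  have ha1 : (0:ℝ) ≤ (a:ℝ) - 1 := by
    have : (1:ℝ) ≤ a := by exact_mod_cast ha
    linarith
  set R : ℝ := ((b : ℝ) - 1) ^ ((1 : ℝ) / a) * m * (n : ℝ) ^ (1 - (1 : ℝ) / a)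
      + ((a : ℝ) - 1) * n with hR
  have hR0 : 0 ≤ R := by
    apply add_nonneg
    · exact mul_nonneg (mul_nonneg (Real.rpow_nonneg hb1 _) (Nat.cast_nonneg m))
        (Real.rpow_nonneg (Nat.cast_nonneg n) _)
    · exact mul_nonneg ha1 (Nat.cast_nonneg n)
  have hz : _root_.zarankiewicz m n a b ≤ ⌊R⌋₊ := by
    apply csSup_le'
    rintro k ⟨M, hM, rfl⟩
    exact Nat.le_floor (KSTAux.real_bound ha hb hm hn M hM)
  calc (_root_.zarankiewicz m n a b : ℝ) ≤ (⌊R⌋₊ : ℝ) := Nat.cast_le.mpr hz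
    _ ≤ R := Nat.floor_le hR0
end

section
/- For all integers m, n ≥ 1 the Zarankiewicz number satisfies Z(m, n, 2, 2) ≤ (1/2)·(m + √(m² + 4·m·n·(n−1))). -/
open Finset SimpleGraph

lemma reiman_key (m n : ℕ) (hm : 1 ≤ m) (hn : 1 ≤ n) (M : Fin m → Fin n → Bool)
    (hM : ¬ ∃ (R : Finset (Fin m)) (C : Finset (Fin n)), R.card = 2 ∧ C.card = 2 ∧
        ∀ i ∈ R, ∀ j ∈ C, M i j = true) :
    ((Finset.univ.filter fun p : Fin m × Fin n => M p.1 p.2 = true).card : ℝ) ≤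
      1 / 2 * ((m : ℝ) + Real.sqrt ((m : ℝ) ^ 2 + 4 * m * n * ((n : ℝ) - 1))) := by
  set A : Fin m → Finset (Fin n) := fun i => Finset.univ.filter fun j => M i j = true with hA
  set k : ℕ := (Finset.univ.filter fun p : Fin m × Fin n => M p.1 p.2 = true).card with hkdef
  have hk : k = ∑ i, (A i).card := by
    simp only [hkdef, hA, Finset.card_filter, Fintype.sum_prod_type]
  -- disjointness of offDiags
  have hdisj : ∀ i₁ ∈ (univ : Finset (Fin m)), ∀ i₂ ∈ univ, i₁ ≠ i₂ →
      Disjoint ((A i₁).offDiag) ((A i₂).offDiag) := by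
    intro i₁ _ i₂ _ hne
    rw [Finset.disjoint_left]
    rintro ⟨j₁, j₂⟩ h1 h2
    simp only [Finset.mem_offDiag, hA, Finset.mem_filter, Finset.mem_univ, true_and] at h1 h2
    exact hM ⟨{i₁, i₂}, {j₁, j₂}, Finset.card_pair hne, Finset.card_pair h1.2.2, by
      intro i hi j hj
      simp only [Finset.mem_insert, Finset.mem_singleton] at hi hj
      rcases hi with rfl | rfl <;> rcases hj with rfl | rfl <;>
        first | exact h1.1 | exact h1.2.1 | exact h2.1 | exact h2.2.1⟩
  have hsum : ∑ i, ((A i).offDiag).card ≤ n * n - n := by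
    rw [← Finset.card_biUnion hdisj]
    calc (Finset.univ.biUnion fun i => (A i).offDiag).card
        ≤ (Finset.univ : Finset (Fin n)).offDiag.card := by
          apply Finset.card_le_card
          intro p hp
          simp only [Finset.mem_biUnion] at hp
          obtain ⟨i, _, hp⟩ := hp
          simp only [Finset.mem_offDiag] at hp ⊢
          exact ⟨Finset.mem_univ _, Finset.mem_univ _, hp.2.2⟩
      _ = n * n - n := by rw [Finset.offDiag_card]; simp
  have hsq : ∑ i, (A i).card * (A i).card ≤ (n * n - n) + k := by
    have : ∀ i, (A i).card * (A i).card = ((A i).offDiag).card + (A i).card := by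
      intro i
      rw [Finset.offDiag_card]
      have h : (A i).card ≤ (A i).card * (A i).card := by nlinarith [Nat.zero_le ((A i).card)]
      omega
    calc ∑ i, (A i).card * (A i).card = ∑ i, (((A i).offDiag).card + (A i).card) :=
          Finset.sum_congr rfl fun i _ => this i
      _ = (∑ i, ((A i).offDiag).card) + k := by rw [Finset.sum_add_distrib, hk]
      _ ≤ (n * n - n) + k := by omega
  -- Cauchy-Schwarz over ℝ
  have hcs : ((k : ℝ)) ^ 2 ≤ (m : ℝ) * ∑ i, ((A i).card : ℝ) ^ 2 := by
    have := Finset.sum_mul_sq_le_sq_mul_sq Finset.univ (fun i : Fin m => ((A i).card : ℝ))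
      (fun _ => (1 : ℝ))
    simp only [mul_one, one_pow, Finset.sum_const, Finset.card_univ, Fintype.card_fin,
      nsmul_eq_mul, mul_one] at this
    rw [hk]
    push_cast
    nlinarith [this]
  have hnn : (n : ℕ) ≤ n * n := Nat.le_mul_of_pos_left n hn
  have hsqR : ∑ i, ((A i).card : ℝ) ^ 2 ≤ (n : ℝ) * n - n + k := by
    have h := (Nat.cast_le (α := ℝ)).mpr hsq
    push_cast [Nat.cast_sub hnn] at h
    calc ∑ i, ((A i).card : ℝ) ^ 2 = ∑ i, ((A i).card : ℝ) * (A i).card :=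
          Finset.sum_congr rfl fun i _ => sq ((A i).card : ℝ)
      _ ≤ (n : ℝ) * n - n + k := h
  -- combine
  have hn' : (1 : ℝ) ≤ n := by exact_mod_cast hn
  have hm' : (1 : ℝ) ≤ m := by exact_mod_cast hm
  have hkey : ((k : ℝ)) ^ 2 ≤ (m : ℝ) * ((n : ℝ) * n - n + k) :=
    hcs.trans (mul_le_mul_of_nonneg_left hsqR (by linarith))
  have h4 : (0:ℝ) ≤ 4 * m * n * ((n : ℝ) - 1) :=
    mul_nonneg (by positivity) (by linarith)
  have harg : (0:ℝ) ≤ (m : ℝ) ^ 2 + 4 * m * n * ((n : ℝ) - 1) := by nlinarith [sq_nonneg (m:ℝ)]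
  set s := Real.sqrt ((m : ℝ) ^ 2 + 4 * m * n * ((n : ℝ) - 1)) with hs
  have hs0 : 0 ≤ s := Real.sqrt_nonneg _
  have hs2 : s ^ 2 = (m : ℝ) ^ 2 + 4 * m * n * ((n : ℝ) - 1) := Real.sq_sqrt harg
  nlinarith [hkey, hs0, hs2, sq_nonneg (2 * (k:ℝ) - m - s), sq_nonneg (2 * (k:ℝ) - m + s)]

/-- Reiman: `Z(m,n,2,2) ≤ (1/2)·(m + √(m² + 4mn(n−1)))`. -/
theorem reiman_zarankiewicz (m n : ℕ) (hm : 1 ≤ m) (hn : 1 ≤ n) :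
    (_root_.zarankiewicz m n 2 2 : ℝ) ≤
      1 / 2 * ((m : ℝ) + Real.sqrt ((m : ℝ) ^ 2 + 4 * m * n * ((n : ℝ) - 1))) := by
  set S := {k | ∃ M : Fin m → Fin n → Bool,
    (¬ ∃ (R : Finset (Fin m)) (C : Finset (Fin n)), R.card = 2 ∧ C.card = 2 ∧
        ∀ i ∈ R, ∀ j ∈ C, M i j = true) ∧
    k = (Finset.univ.filter fun p : Fin m × Fin n => M p.1 p.2 = true).card} with hS
  have hne : S.Nonempty := by
    refine ⟨_, fun _ _ => false, ?_, rfl⟩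
    rintro ⟨R, C, hR, hC, hall⟩
    have hR' : R.Nonempty := Finset.card_pos.mp (by omega)
    have hC' : C.Nonempty := Finset.card_pos.mp (by omega)
    obtain ⟨i, hi⟩ := hR'; obtain ⟨j, hj⟩ := hC'
    simpa using hall i hi j hj
  have hbdd : BddAbove S := by
    refine ⟨m * n, ?_⟩
    rintro k ⟨M, _, rfl⟩
    calc (Finset.univ.filter fun p : Fin m × Fin n => M p.1 p.2 = true).card
        ≤ (Finset.univ : Finset (Fin m × Fin n)).card := Finset.card_filter_le _ _
      _ = m * n := by simp
  have hmem : sSup S ∈ S := Nat.sSup_mem hne hbdd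
  obtain ⟨M, hM, hk⟩ := hmem
  rw [_root_.zarankiewicz, ← hS, hk]
  exact reiman_key m n hm hn M hM
end

section
/- Let V be a finite set with n elements and let F be a finite family of 3-element subsets of V with the following property: there is no nonempty subfamily F' ⊆ F such that every 2-element subset of V is contained in an even number of members of F'. Then |F| ≤ C(n,2) = n(n−1)/2. -/
/-- Lovász: if `F` is a family of 3-element subsets of an `n`-element set such that
no nonempty subfamily `F' ⊆ F` covers every pair an even number of times, then
`|F| ≤ C(n,2)`. -/
theorem lovasz_even_cover {V : Type*} [Fintype V] [DecidableEq V] (n : ℕ)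
    (hV : Fintype.card V = n) (F : Finset (Finset V)) (h3 : ∀ T ∈ F, T.card = 3)
    (hF : ¬ ∃ F' ⊆ F, F'.Nonempty ∧ ∀ x y : V, x ≠ y →
        Even ((F'.filter fun T => x ∈ T ∧ y ∈ T).card)) :
    F.card ≤ n.choose 2 := by
  classical
  set P := {s : Finset V // s.card = 2} with hP
  set φ : Finset V → (P → ZMod 2) := fun T s => if (s : Finset V) ⊆ T then 1 else 0 with hφ
  have hzm : ∀ z : ZMod 2, z = 0 ∨ z = 1 := by decide
  have hli : LinearIndependent (ZMod 2) (fun T : F => φ (T : Finset V)) := by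
    rw [Fintype.linearIndependent_iff]
    intro g hg
    by_contra hne
    push_neg at hne
    obtain ⟨i, hi⟩ := hne
    set F' : Finset (Finset V) :=
      F.filter (fun T => ∃ h : T ∈ F, g ⟨T, h⟩ ≠ 0) with hF'
    apply hF
    refine ⟨F', Finset.filter_subset _ _, ⟨i, Finset.mem_filter.2 ⟨i.2, i.2, hi⟩⟩, ?_⟩
    intro x y hxy
    have hs2 : ({x, y} : Finset V).card = 2 := Finset.card_pair hxy
    have key : ((F'.filter fun T => x ∈ T ∧ y ∈ T).card : ZMod 2) = 0 := by
      have hg' := congrFun hg ⟨{x, y}, hs2⟩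
      simp only [Finset.sum_apply, Pi.smul_apply, Pi.zero_apply, smul_eq_mul] at hg'
      rw [← hg', Finset.card_filter]
      push_cast
      rw [Finset.sum_filter, ← Finset.sum_attach F (fun T => if (∃ h : T ∈ F, g ⟨T, h⟩ ≠ 0) then (if x ∈ T ∧ y ∈ T then (1 : ZMod 2) else 0) else 0)]
      apply Finset.sum_congr rfl
      intro T _
      have hmem : (∃ (h : (T : Finset V) ∈ F), g ⟨(T : Finset V), h⟩ ≠ 0) ↔ g T ≠ 0 := by
        constructor
        · rintro ⟨h, hgn⟩; simpa using hgn
        · intro h; exact ⟨T.2, by simpa using h⟩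
      rw [if_congr hmem rfl rfl]
      have hsub : ((({x, y} : Finset V)) ⊆ (T : Finset V)) ↔ (x ∈ (T:Finset V) ∧ y ∈ (T:Finset V)) := by
        simp [Finset.insert_subset_iff]
      rcases hzm (g T) with h0 | h1
      · simp [hφ, h0]
      · simp [hφ, h1, hsub]
    exact ZMod.natCast_eq_zero_iff_even.mp key
  have hcard : Fintype.card P = n.choose 2 := by
    have : Fintype.card P = (Fintype.card V).choose 2 := Fintype.card_finset_len 2
    rw [this, hV]
  calc F.card = Fintype.card F := (Fintype.card_coe F).symm
    _ ≤ Module.finrank (ZMod 2) (P → ZMod 2) := hli.fintype_card_le_finrank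
    _ = Fintype.card P := Module.finrank_pi _
    _ = n.choose 2 := hcard
end

section
/- Let G be a bipartite simple graph on n vertices with at least 2 edges that contains no subgraph isomorphic to C₆. Then G contains a subgraph H with e(H) ≥ e(G)/2 + 1 edges such that H contains no subgraph isomorphic to C₄. -/
open Finset SimpleGraph

lemma containsCopy_mono {V β : Type*} {G H : SimpleGraph V} {K : SimpleGraph β}
    (hle : G ≤ H) (h : G.ContainsCopy K) : H.ContainsCopy K := by
  obtain ⟨f, hf⟩ := h; exact ⟨f, fun u v huv => hle (hf u v huv)⟩

lemma c4_elim {V : Type*} {G : SimpleGraph V} (h : G.ContainsCopy (cycleGraph 4)) :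
    ∃ p q r w : V, p≠q ∧ p≠r ∧ p≠w ∧ q≠r ∧ q≠w ∧ r≠w ∧
      G.Adj p q ∧ G.Adj q r ∧ G.Adj r w ∧ G.Adj w p := by
  obtain ⟨f, hf⟩ := h
  refine ⟨f 0, f 1, f 2, f 3, ?_, ?_, ?_, ?_, ?_, ?_, ?_, ?_, ?_, ?_⟩
  all_goals first
    | (apply f.injective.ne; decide)
    | (apply hf; decide)

lemma c4_intro {V : Type*} {G : SimpleGraph V} {p q r w : V}
    (h1:p≠q)(h2:p≠r)(h3:p≠w)(h4:q≠r)(h5:q≠w)(h6:r≠w)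
    (a1:G.Adj p q)(a2:G.Adj q r)(a3:G.Adj r w)(a4:G.Adj w p) :
    G.ContainsCopy (cycleGraph 4) := by
  refine ⟨⟨![p,q,r,w], ?_⟩, ?_⟩
  · intro i j hij
    fin_cases i <;> fin_cases j <;> simp_all
  · intro u v huv
    fin_cases u <;> fin_cases v <;>
      first
        | exact a1 | exact a1.symm | exact a2 | exact a2.symm
        | exact a3 | exact a3.symm | exact a4 | exact a4.symm
        | (exfalso; revert huv; decide)

lemma c6_intro {V : Type*} {G : SimpleGraph V} {v0 v1 v2 v3 v4 v5 : V}
    (h01:v0≠v1)(h02:v0≠v2)(h03:v0≠v3)(h04:v0≠v4)(h05:v0≠v5)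
    (h12:v1≠v2)(h13:v1≠v3)(h14:v1≠v4)(h15:v1≠v5)
    (h23:v2≠v3)(h24:v2≠v4)(h25:v2≠v5)
    (h34:v3≠v4)(h35:v3≠v5)(h45:v4≠v5)
    (a0:G.Adj v0 v1)(a1:G.Adj v1 v2)(a2:G.Adj v2 v3)
    (a3:G.Adj v3 v4)(a4:G.Adj v4 v5)(a5:G.Adj v5 v0) :
    G.ContainsCopy (cycleGraph 6) := by
  refine ⟨⟨fun i => match i with
    | 0 => v0 | 1 => v1 | 2 => v2 | 3 => v3 | 4 => v4 | 5 => v5, ?_⟩, ?_⟩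
  · intro i j hij
    fin_cases i <;> fin_cases j <;>
      first
        | rfl
        | exact (h01 hij).elim
        | exact (h01 hij.symm).elim
        | exact (h02 hij).elim
        | exact (h02 hij.symm).elim
        | exact (h03 hij).elim
        | exact (h03 hij.symm).elim
        | exact (h04 hij).elim
        | exact (h04 hij.symm).elim
        | exact (h05 hij).elim
        | exact (h05 hij.symm).elim
        | exact (h12 hij).elim
        | exact (h12 hij.symm).elim
        | exact (h13 hij).elim
        | exact (h13 hij.symm).elim
        | exact (h14 hij).elim
        | exact (h14 hij.symm).elim
        | exact (h15 hij).elim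
        | exact (h15 hij.symm).elim
        | exact (h23 hij).elim
        | exact (h23 hij.symm).elim
        | exact (h24 hij).elim
        | exact (h24 hij.symm).elim
        | exact (h25 hij).elim
        | exact (h25 hij.symm).elim
        | exact (h34 hij).elim
        | exact (h34 hij.symm).elim
        | exact (h35 hij).elim
        | exact (h35 hij.symm).elim
        | exact (h45 hij).elim
        | exact (h45 hij.symm).elim
  · intro u v huv
    fin_cases u <;> fin_cases v <;>
      first
        | exact a0 | exact a0.symm | exact a1 | exact a1.symm
        | exact a2 | exact a2.symm | exact a3 | exact a3.symm
        | exact a4 | exact a4.symm | exact a5 | exact a5.symm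
        | (exfalso; revert huv; decide)

lemma fin2_eq {x y z : Fin 2} (hx : x ≠ z) (hy : y ≠ z) : x = y := by omega

lemma claimC {V : Type*} [Fintype V] {G : SimpleGraph V} (col : G.Coloring (Fin 2))
    (hC6 : ¬ G.ContainsCopy (cycleGraph 6)) {a c : V} (hac : a ≠ c)
    {S : Finset V} (hS : ∀ v, v ∈ S ↔ G.Adj a v ∧ G.Adj c v) (ht : 2 ≤ S.card)
    (hmax : ∀ u v : V, u ≠ v → ∀ T : Finset V,
      (∀ w, w ∈ T ↔ G.Adj u w ∧ G.Adj v w) → T.card ≤ S.card)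
    {s x y : V} (hs : s ∈ S) (hsx : G.Adj s x) (hxy : G.Adj x y) (hya : G.Adj y a)
    (hxa : x ≠ a) (hys : y ≠ s) : x = c ∧ y ∈ S := by
  classical
  have has : G.Adj a s := ((hS s).mp hs).1
  have hcs : G.Adj c s := ((hS s).mp hs).2
  have hcolac : col a = col c := fin2_eq (col.valid has) (col.valid hcs)
  have hcolx : col x = col a := fin2_eq (col.valid hsx.symm) (col.valid has)
  have hxc : x = c := by
    by_contra hxc
    by_cases hyS : y ∈ S
    · -- s and y have ≥3 common neighbours a, c, x; maximality gives |S| ≥ 3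
      have hay : G.Adj a y := ((hS y).mp hyS).1
      have hcy : G.Adj c y := ((hS y).mp hyS).2
      set T : Finset V := Finset.univ.filter (fun w => G.Adj s w ∧ G.Adj y w) with hT
      have hTmem : ∀ w, w ∈ T ↔ G.Adj s w ∧ G.Adj y w := by
        intro w; simp [hT]
      have haT : a ∈ T := (hTmem a).mpr ⟨has.symm, hay.symm⟩
      have hcT : c ∈ T := (hTmem c).mpr ⟨hcs.symm, hcy.symm⟩
      have hxT : x ∈ T := (hTmem x).mpr ⟨hsx, hxy.symm⟩
      have hsub : ({a, c, x} : Finset V) ⊆ T := by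
        intro z hz
        simp only [Finset.mem_insert, Finset.mem_singleton] at hz
        rcases hz with rfl | rfl | rfl <;> assumption
      have hcard3 : ({a, c, x} : Finset V).card = 3 :=
        Finset.card_eq_three.mpr ⟨a, c, x, hac, (Ne.symm hxa), (fun h => hxc h.symm), rfl⟩
      have h3 : 3 ≤ S.card := by
        have := hmax s y (fun h => hys (h.symm)) T hTmem
        have := Finset.card_le_card hsub
        omega
      -- pick d ∈ S, d ∉ {s, y}
      have hd : (S \ {s, y}).Nonempty := by
        rw [← Finset.card_pos]
        have h1 := Finset.le_card_sdiff ({s, y} : Finset V) S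
        have h2 : ({s, y} : Finset V).card ≤ 2 := Finset.card_insert_le _ _ |>.trans (by simp)
        omega
      obtain ⟨d, hdmem⟩ := hd
      rw [Finset.mem_sdiff, Finset.mem_insert, Finset.mem_singleton] at hdmem
      obtain ⟨hdS, hd2⟩ := hdmem
      push_neg at hd2
      obtain ⟨hds, hdy⟩ := hd2
      have had : G.Adj a d := ((hS d).mp hdS).1
      have hcd : G.Adj c d := ((hS d).mp hdS).2
      -- cycle a s x y c d
      exact hC6 (c6_intro has.ne (Ne.symm hxa) hya.ne' hac had.ne
        hsx.ne (Ne.symm hys) hcs.ne' (Ne.symm hds)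
        hxy.ne hxc (fun h => (col.valid had) (by rw [← h]; exact hcolx.symm))
        hcy.ne' (Ne.symm hdy)
        hcd.ne
        has hsx hxy hcy.symm hcd had.symm)
    · -- y ∉ S : pick d ∈ S, d ≠ s ; cycle y a d c s x
      have hd : (S \ {s} : Finset V).Nonempty := by
        rw [← Finset.card_pos]
        have h1 := Finset.le_card_sdiff ({s} : Finset V) S
        simp only [Finset.card_singleton] at h1
        omega
      obtain ⟨d, hdmem⟩ := hd
      rw [Finset.mem_sdiff, Finset.mem_singleton] at hdmem
      obtain ⟨hdS, hds⟩ := hdmem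
      have had : G.Adj a d := ((hS d).mp hdS).1
      have hcd : G.Adj c d := ((hS d).mp hdS).2
      have hyd : y ≠ d := fun h => hyS (h ▸ hdS)
      have hyc : y ≠ c := fun h => (col.valid hya) (h ▸ hcolac).symm
      exact hC6 (c6_intro hya.ne hyd hyc hys hxy.ne'
        had.ne hac has.ne (Ne.symm hxa)
        hcd.ne' hds (fun h => (col.valid had) (by rw [h]; exact hcolx.symm))
        hcs.ne (Ne.symm hxc) hsx.ne
        hya had hcd.symm hcs hsx hxy)
  subst hxc
  exact ⟨rfl, (hS y).mpr ⟨hya.symm, hxy⟩⟩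


lemma star_free {V : Type*} [Fintype V] [DecidableEq V] {G : SimpleGraph V} (col : G.Coloring (Fin 2))
    (hC6 : ¬ G.ContainsCopy (cycleGraph 6)) {a c : V} (hac : a ≠ c)
    {S : Finset V} (hS : ∀ v, v ∈ S ↔ G.Adj a v ∧ G.Adj c v) (ht : 2 ≤ S.card)
    (hmax : ∀ u v : V, u ≠ v → ∀ T : Finset V,
      (∀ w, w ∈ T ↔ G.Adj u w ∧ G.Adj v w) → T.card ≤ S.card)
    {s₀ : V} (hs₀ : s₀ ∈ S) {H' : SimpleGraph V} (hH'G : H' ≤ G)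
    (hH'E0 : ∀ v ∈ S, ¬ H'.Adj a v ∧ ¬ H'.Adj c v)
    (hH'free : ¬ H'.ContainsCopy (cycleGraph 4)) :
    ¬ (H' ⊔ fromEdgeSet ↑(S.image (fun v => s(a,v)) ∪ {s(c,s₀)})).ContainsCopy (cycleGraph 4) := by
  classical
  set K : SimpleGraph V := fromEdgeSet ↑(S.image (fun v => s(a,v)) ∪ {s(c,s₀)}) with hKdef
  set H : SimpleGraph V := H' ⊔ K with hHdef
  have hK : ∀ u v, K.Adj u v →
      (u = a ∧ v ∈ S) ∨ (v = a ∧ u ∈ S) ∨ (u = c ∧ v = s₀) ∨ (v = c ∧ u = s₀) := by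
    intro u v huv
    rw [hKdef, fromEdgeSet_adj] at huv
    obtain ⟨hmem, hne⟩ := huv
    simp only [Finset.coe_union, Set.mem_union, Finset.coe_image, Set.mem_image,
      Finset.mem_coe, Finset.coe_singleton, Set.mem_singleton_iff] at hmem
    rcases hmem with ⟨w, hwS, hw⟩ | h
    · rw [Sym2.eq_iff] at hw
      rcases hw with ⟨rfl, rfl⟩ | ⟨rfl, rfl⟩
      · exact Or.inl ⟨rfl, hwS⟩
      · exact Or.inr (Or.inl ⟨rfl, hwS⟩)
    · rw [Sym2.eq_iff] at h
      rcases h with ⟨rfl, rfl⟩ | ⟨rfl, rfl⟩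
      · exact Or.inr (Or.inr (Or.inl ⟨rfl, rfl⟩))
      · exact Or.inr (Or.inr (Or.inr ⟨rfl, rfl⟩))
  have hKG : K ≤ G := by
    intro u v huv
    rcases hK u v huv with ⟨h1, h2⟩ | ⟨h1, h2⟩ | ⟨h1, h2⟩ | ⟨h1, h2⟩
    · exact h1 ▸ ((hS v).mp h2).1
    · exact h1 ▸ ((hS u).mp h2).1.symm
    · rw [h1, h2]; exact ((hS s₀).mp hs₀).2
    · rw [h1, h2]; exact ((hS s₀).mp hs₀).2.symm
  have hHG : H ≤ G := sup_le hH'G hKG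
  have hA : ∀ s x y : V, s ∈ S → H.Adj s x → H.Adj x y → G.Adj y a → x ≠ a → y ≠ s → False := by
    intro s x y hsS hHsx hHxy hGya hxa hys
    obtain ⟨hxc, hyS⟩ := claimC col hC6 hac hS ht hmax hsS (hHG hHsx) (hHG hHxy) hGya hxa hys
    have hHsc : H.Adj s c := hxc ▸ hHsx
    have hHcy : H.Adj c y := hxc ▸ hHxy
    have hss₀ : s = s₀ := by
      rcases (sup_adj H' K s c).mp hHsc with h | h
      · exact absurd h.symm (hH'E0 s hsS).2
      · rcases hK s c h with ⟨h1, h2⟩ | ⟨h1, h2⟩ | ⟨h1, h2⟩ | ⟨h1, h2⟩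
        · exact absurd ((hS c).mp h2).2 (G.loopless.irrefl c)
        · exact absurd h1.symm hac
        · exact absurd (h1 ▸ ((hS s).mp hsS).2) (G.loopless.irrefl c)
        · exact h2
    have hys₀ : y = s₀ := by
      rcases (sup_adj H' K c y).mp hHcy with h | h
      · exact absurd h (hH'E0 y hyS).2
      · rcases hK c y h with ⟨h1, h2⟩ | ⟨h1, h2⟩ | ⟨h1, h2⟩ | ⟨h1, h2⟩
        · exact absurd h1 (Ne.symm hac)
        · exact absurd ((hS c).mp h2).2 (G.loopless.irrefl c)
        · exact h2
        · exact absurd (h1 ▸ ((hS y).mp hyS).2) (G.loopless.irrefl c)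
    exact hys (hys₀.trans hss₀.symm)
  have hS' : ∀ v, v ∈ S ↔ G.Adj c v ∧ G.Adj a v := by
    intro v; rw [hS]; tauto
  have hC : ∀ x y : V, G.Adj s₀ x → G.Adj x y → H.Adj y c → x ≠ c → y ≠ s₀ → False := by
    intro x y hGsx hGxy hHyc hxc hys
    obtain ⟨hxa, hyS⟩ := claimC col hC6 hac.symm hS' ht hmax hs₀ hGsx hGxy
      (hHG hHyc) hxc hys
    rcases (sup_adj H' K y c).mp hHyc with h | h
    · exact absurd h.symm (hH'E0 y hyS).2
    · rcases hK y c h with ⟨h1, h2⟩ | ⟨h1, h2⟩ | ⟨h1, h2⟩ | ⟨h1, h2⟩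
      · exact absurd ((hS c).mp h2).2 (G.loopless.irrefl c)
      · exact absurd h1 (Ne.symm hac)
      · exact absurd h1 ((hS y).mp hyS).2.ne'
      · exact hys h2
  intro hcopy
  obtain ⟨p, q, r, w, d1, d2, d3, d4, d5, d6, hpq, hqr, hrw, hwp⟩ := c4_elim hcopy
  have key : ∀ P Q R W : V, P ≠ R → Q ≠ W → H.Adj P Q → H.Adj Q R → H.Adj R W →
      H.Adj W P → K.Adj P Q → False := by
    intro P Q R W d2 d5 e1 e2 e3 e4 hk
    rcases hK P Q hk with ⟨h1, h2⟩ | ⟨h1, h2⟩ | ⟨h1, h2⟩ | ⟨h1, h2⟩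
    · -- P = a, Q ∈ S : cycle a Q R W
      exact hA Q R W h2 e2 e3 (h1 ▸ hHG e4) (h1 ▸ Ne.symm d2) (Ne.symm d5)
    · -- Q = a, P ∈ S : cycle a P W R
      exact hA P W R h2 e4.symm e3.symm (h1 ▸ (hHG e2).symm) (h1 ▸ Ne.symm d5) (Ne.symm d2)
    · -- P = c, Q = s₀ : cycle c s₀ R W
      exact hC R W (h2 ▸ hHG e2) (hHG e3) (h1 ▸ e4) (h1 ▸ Ne.symm d2) (h2 ▸ Ne.symm d5)
    · -- Q = c, P = s₀ : cycle c s₀ W R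
      exact hC W R (h2 ▸ (hHG e4).symm) ((hHG e3).symm) (h1 ▸ e2.symm) (h1 ▸ Ne.symm d5)
        (h2 ▸ Ne.symm d2)
  by_cases k1 : K.Adj p q
  · exact key p q r w d2 d5 hpq hqr hrw hwp k1
  by_cases k2 : K.Adj q r
  · exact key q r w p d5 (Ne.symm d2) hqr hrw hwp hpq k2
  by_cases k3 : K.Adj r w
  · exact key r w p q (Ne.symm d2) (Ne.symm d5) hrw hwp hpq hqr k3
  by_cases k4 : K.Adj w p
  · exact key w p q r (Ne.symm d5) d2 hwp hpq hqr hrw k4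
  exact hH'free (c4_intro d1 d2 d3 d4 d5 d6
    (((sup_adj H' K p q).mp hpq).resolve_right k1)
    (((sup_adj H' K q r).mp hqr).resolve_right k2)
    (((sup_adj H' K r w).mp hrw).resolve_right k3)
    (((sup_adj H' K w p).mp hwp).resolve_right k4))

lemma c4_free_of_small {V : Type*} [Fintype V] {G : SimpleGraph V}
    (h : G.edgeSet.ncard ≤ 1) : ¬ G.ContainsCopy (cycleGraph 4) := by
  intro hc
  obtain ⟨p, q, r, w, d1, d2, d3, d4, d5, d6, a1, a2, a3, a4⟩ := c4_elim hc
  have hne : s(p,q) ≠ s(q,r) := by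
    intro heq
    rcases Sym2.eq_iff.mp heq with ⟨h1, h2⟩ | ⟨h1, h2⟩
    · exact d1 h1
    · exact d2 h1
  have hsub : ({s(p,q), s(q,r)} : Set (Sym2 V)) ⊆ G.edgeSet := by
    intro e he
    simp only [Set.mem_insert_iff, Set.mem_singleton_iff] at he
    rcases he with rfl | rfl
    · exact a1
    · exact a2
  have h2 := Set.ncard_le_ncard hsub (Set.toFinite _)
  rw [Set.ncard_pair hne] at h2
  omega


/-- Győri: a bipartite `C₆`-free graph `G` with at least 2 edges contains a
`C₄`-free subgraph `H` with `e(H) ≥ e(G)/2 + 1`. -/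
theorem gyori_C6 {V : Type*} [Fintype V] (G : SimpleGraph V)
    (hbip : G.Colorable 2) (he : 2 ≤ edgeCount G)
    (hC6 : ¬ G.ContainsCopy (cycleGraph 6)) :
    ∃ H : SimpleGraph V, H ≤ G ∧ ¬ H.ContainsCopy (cycleGraph 4) ∧
      (edgeCount G : ℝ) / 2 + 1 ≤ (edgeCount H : ℝ) := by
  classical
  suffices h : ∀ n : ℕ, ∀ G : SimpleGraph V, G.Colorable 2 → ¬ G.ContainsCopy (cycleGraph 6) →
      2 ≤ edgeCount G → edgeCount G = n →
      ∃ H, H ≤ G ∧ ¬ H.ContainsCopy (cycleGraph 4) ∧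
        (edgeCount G : ℝ) / 2 + 1 ≤ (edgeCount H : ℝ) by
    exact h _ G hbip hC6 he rfl
  intro n
  induction n using Nat.strong_induction_on with
  | _ n IH =>
    intro G hbip hC6 he hn
    by_cases hC4 : G.ContainsCopy (cycleGraph 4)
    swap
    · refine ⟨G, le_refl G, hC4, ?_⟩
      have h2 : (2:ℝ) ≤ (edgeCount G : ℝ) := by exact_mod_cast he
      linarith
    obtain ⟨p0, q0, r0, w0, d1, d2, d3, d4, d5, d6, a1, a2, a3, a4⟩ := c4_elim hC4
    obtain ⟨pr, hprP, hprmax⟩ := Finset.exists_max_image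
      (Finset.univ.filter (fun z : V × V => z.1 ≠ z.2))
      (fun z => (Finset.univ.filter (fun w => G.Adj z.1 w ∧ G.Adj z.2 w)).card)
      ⟨(p0, r0), by simp [d2]⟩
    obtain ⟨a, c⟩ := pr
    simp only [Finset.mem_filter, Finset.mem_univ, true_and] at hprP hprmax
    have hac : a ≠ c := hprP
    set S : Finset V := Finset.univ.filter (fun w => G.Adj a w ∧ G.Adj c w) with hSdef
    have hS : ∀ v, v ∈ S ↔ G.Adj a v ∧ G.Adj c v := by intro v; simp [hSdef]
    have hmax : ∀ u v : V, u ≠ v → ∀ T : Finset V,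
        (∀ w, w ∈ T ↔ G.Adj u w ∧ G.Adj v w) → T.card ≤ S.card := by
      intro u v huv T hT
      have hTeq : T = Finset.univ.filter (fun w => G.Adj u w ∧ G.Adj v w) := by
        ext w; simp [hT w]
      have h2 := hprmax (u, v) huv
      simp only at h2
      rw [hTeq]
      exact h2
    have ht : 2 ≤ S.card := by
      have hmem1 : q0 ∈ Finset.univ.filter (fun w => G.Adj p0 w ∧ G.Adj r0 w) := by
        simp [a1, a2.symm]
      have hmem2 : w0 ∈ Finset.univ.filter (fun w => G.Adj p0 w ∧ G.Adj r0 w) := by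
        simp [a4.symm, a3]
      have hcard : 1 < (Finset.univ.filter (fun w => G.Adj p0 w ∧ G.Adj r0 w)).card :=
        Finset.one_lt_card.mpr ⟨q0, hmem1, w0, hmem2, d5⟩
      have h2 := hprmax (p0, r0) d2
      simp only at h2
      omega
    obtain ⟨s₀, hs₀⟩ : S.Nonempty := Finset.card_pos.mp (by omega)
    have haS : a ∉ S := fun h => G.loopless.irrefl a ((hS a).mp h).1
    set E0 : Finset (Sym2 V) := S.image (fun v => s(a,v)) ∪ S.image (fun v => s(c,v)) with hE0
    set E1 : Finset (Sym2 V) := S.image (fun v => s(a,v)) ∪ {s(c,s₀)} with hE1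
    have hinj_a : Set.InjOn (fun v => s(a,v)) ↑S := by
      intro x _ y _ h
      rcases Sym2.eq_iff.mp h with ⟨_, h2⟩ | ⟨h1, h2⟩
      · exact h2
      · exact h2.trans h1
    have hinj_c : Set.InjOn (fun v => s(c,v)) ↑S := by
      intro x _ y _ h
      rcases Sym2.eq_iff.mp h with ⟨_, h2⟩ | ⟨h1, h2⟩
      · exact h2
      · exact h2.trans h1
    have hdisj0 : Disjoint (S.image (fun v => s(a,v))) (S.image (fun v => s(c,v))) := by
      rw [Finset.disjoint_left]
      rintro e he1 he2
      obtain ⟨x, hx, rfl⟩ := Finset.mem_image.mp he1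
      obtain ⟨y, hy, hxy⟩ := Finset.mem_image.mp he2
      rcases Sym2.eq_iff.mp hxy with ⟨h1, h2⟩ | ⟨h1, h2⟩
      · exact hac h1.symm
      · exact haS (by rw [← h2]; exact hy)
    have hcard0 : E0.card = 2 * S.card := by
      rw [hE0, Finset.card_union_of_disjoint hdisj0, Finset.card_image_of_injOn hinj_a,
        Finset.card_image_of_injOn hinj_c]
      ring
    have hs₀im : s(c,s₀) ∉ S.image (fun v => s(a,v)) := by
      intro h
      obtain ⟨x, hx, hxx⟩ := Finset.mem_image.mp h
      rcases Sym2.eq_iff.mp hxx with ⟨h1, h2⟩ | ⟨h1, h2⟩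
      · exact hac h1
      · exact haS (by rw [h1]; exact hs₀)
    have hcard1 : E1.card = S.card + 1 := by
      rw [hE1, Finset.card_union_of_disjoint (Finset.disjoint_singleton_right.mpr hs₀im),
        Finset.card_image_of_injOn hinj_a, Finset.card_singleton]
    have hE1subE0 : E1 ⊆ E0 := by
      rw [hE1, hE0]
      apply Finset.union_subset_union_right
      intro e he
      rw [Finset.mem_singleton] at he
      exact he ▸ Finset.mem_image.mpr ⟨s₀, hs₀, rfl⟩
    have hE0edge : (↑E0 : Set (Sym2 V)) ⊆ G.edgeSet := by
      intro e he
      simp only [hE0, Finset.coe_union, Set.mem_union, Finset.coe_image, Set.mem_image,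
        Finset.mem_coe] at he
      rcases he with ⟨x, hx, rfl⟩ | ⟨x, hx, rfl⟩
      · exact ((hS x).mp hx).1
      · exact ((hS x).mp hx).2
    set G' := G.deleteEdges ↑E0 with hG'
    have hG'le : G' ≤ G := deleteEdges_le _
    have hcntG' : edgeCount G' + 2 * S.card = edgeCount G := by
      have h1 : edgeCount G' = (G.edgeSet \ ↑E0).ncard := by
        rw [edgeCount, hG', edgeSet_deleteEdges]
      have h2 := Set.ncard_diff hE0edge (Set.toFinite _)
      have h3 : (↑E0 : Set (Sym2 V)).ncard = 2 * S.card := by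
        rw [Set.ncard_coe_finset, hcard0]
      have h4 : (↑E0 : Set (Sym2 V)).ncard ≤ G.edgeSet.ncard :=
        Set.ncard_le_ncard hE0edge (Set.toFinite _)
      have h5 : edgeCount G = G.edgeSet.ncard := rfl
      rw [h3] at h2 h4
      rw [h1, h2, h5]
      omega
    have hG'col : G'.Colorable 2 := Colorable.mono_left hG'le hbip
    have hG'C6 : ¬ G'.ContainsCopy (cycleGraph 6) := fun h => hC6 (containsCopy_mono hG'le h)
    obtain ⟨H', hH'le, hH'free, hH'cnt⟩ :
        ∃ H', H' ≤ G' ∧ ¬ H'.ContainsCopy (cycleGraph 4) ∧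
          (edgeCount G' : ℝ) / 2 ≤ (edgeCount H' : ℝ) := by
      by_cases hG'2 : 2 ≤ edgeCount G'
      · have hlt : edgeCount G' < n := by omega
        obtain ⟨H'', h1, h2, h3⟩ := IH (edgeCount G') hlt G' hG'col hG'C6 hG'2 rfl
        exact ⟨H'', h1, h2, by linarith⟩
      · refine ⟨G', le_refl _, c4_free_of_small (by rw [edgeCount] at hG'2; omega), ?_⟩
        have h0 : (0:ℝ) ≤ (edgeCount G' : ℝ) := Nat.cast_nonneg _
        linarith
    set K := fromEdgeSet (↑E1 : Set (Sym2 V)) with hK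
    have col : G.Coloring (Fin 2) := hbip.some
    refine ⟨H' ⊔ K, ?_, ?_, ?_⟩
    · refine sup_le (hH'le.trans hG'le) ?_
      intro u v huv
      rw [hK, fromEdgeSet_adj] at huv
      exact (G.mem_edgeSet).mp (hE0edge (Finset.coe_subset.mpr hE1subE0 huv.1))
    · have hH'E0 : ∀ v ∈ S, ¬ H'.Adj a v ∧ ¬ H'.Adj c v := by
        intro v hv
        constructor <;> intro hadj
        · have h5 := hH'le hadj
          rw [hG', deleteEdges_adj] at h5
          exact h5.2 (by
            simp only [hE0, Finset.coe_union, Set.mem_union, Finset.coe_image, Set.mem_image,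
              Finset.mem_coe]
            exact Or.inl ⟨v, hv, rfl⟩)
        · have h5 := hH'le hadj
          rw [hG', deleteEdges_adj] at h5
          exact h5.2 (by
            simp only [hE0, Finset.coe_union, Set.mem_union, Finset.coe_image, Set.mem_image,
              Finset.mem_coe]
            exact Or.inr ⟨v, hv, rfl⟩)
      have hsf := star_free col hC6 hac hS ht hmax hs₀ (hH'le.trans hG'le) hH'E0 hH'free
      rw [hK, hE1]
      exact hsf
    · have hKedge : K.edgeSet = (↑E1 : Set (Sym2 V)) := by
        rw [hK, edgeSet_fromEdgeSet]
        apply sdiff_eq_left.mpr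
        rw [Set.disjoint_left]
        intro e he hdiag
        simp only [hE1, Finset.coe_union, Set.mem_union, Finset.coe_image, Set.mem_image,
          Finset.mem_coe, Finset.coe_singleton, Set.mem_singleton_iff] at he
        rcases he with ⟨x, hx, rfl⟩ | rfl
        · exact ((hS x).mp hx).1.ne (Sym2.mk_isDiag_iff.mp hdiag)
        · exact ((hS s₀).mp hs₀).2.ne (Sym2.mk_isDiag_iff.mp hdiag)
      have hdisjHK : Disjoint H'.edgeSet K.edgeSet := by
        rw [hKedge, Set.disjoint_left]
        intro e heH' heE1
        have h5 : e ∈ G'.edgeSet := edgeSet_mono hH'le heH'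
        rw [hG', edgeSet_deleteEdges] at h5
        exact h5.2 (Finset.coe_subset.mpr hE1subE0 heE1)
      have hcnt : edgeCount (H' ⊔ K) = edgeCount H' + (S.card + 1) := by
        rw [edgeCount, edgeSet_sup, Set.ncard_union_eq hdisjHK (Set.toFinite _) (Set.toFinite _),
          hKedge, Set.ncard_coe_finset, hcard1]
        rfl
      have hGeq : (edgeCount G : ℝ) = (edgeCount G' : ℝ) + 2 * (S.card : ℝ) := by
        exact_mod_cast (congrArg (Nat.cast : ℕ → ℝ) hcntG').symm
      rw [hcnt]
      push_cast
      linarith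
end

section
/- For every integer k ≥ 1 and every permutation σ of {1, …, k} there exists a constant c > 0 such that for every natural number n, every n × n 0-1 matrix M with more than c·n entries equal to 1 contains the permutation matrix of σ; that is, there exist row indices i₁ < i₂ < … < i_k and column indices j₁ < j₂ < … < j_k such that M[i_s, j_{σ(s)}] = 1 for every s ∈ {1, …, k}. -/
/-- `S` (a set of 1-positions) avoids the permutation pattern `σ`. -/
def MTAvoids {k : ℕ} (σ : Equiv.Perm (Fin k)) (S : Finset (ℕ × ℕ)) : Prop :=
  ¬ ∃ (i j : Fin k → ℕ), StrictMono i ∧ StrictMono j ∧ ∀ s, (i s, j (σ s)) ∈ S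

/-- Key pigeonhole claim: at most `(k-1) * (k²).choose k` blocks in any block-column `J`
are "wide" (contain ones in ≥ k distinct columns). -/
lemma mt_wide_bound {k : ℕ} (hk : 1 ≤ k) (σ : Equiv.Perm (Fin k)) (S : Finset (ℕ × ℕ))
    (hA : MTAvoids σ S) (m J : ℕ) :
    ((Finset.range m).filter fun I =>
      k ≤ ((S.filter fun p => p.1 / k^2 = I ∧ p.2 / k^2 = J).image fun p => p.2 % k^2).card).card
      ≤ (k - 1) * (k^2).choose k := by
  set K := k^2 with hK
  have hK0 : 0 < K := by positivity
  by_contra hcon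
  push_neg at hcon
  set X := (Finset.range m).filter fun I =>
      k ≤ ((S.filter fun p => p.1 / K = I ∧ p.2 / K = J).image fun p => p.2 % K).card with hX
  -- the residue set of the block (I, J)
  set res : ℕ → Finset ℕ := fun I =>
    (S.filter fun p => p.1 / K = I ∧ p.2 / K = J).image fun p => p.2 % K with hres
  -- choice of a k-subset of residues for each wide block
  have hch : ∀ I : ℕ, ∃ C : Finset ℕ, (I ∈ X → (C ⊆ res I ∧ C.card = k)) := by
    intro I
    by_cases hI : I ∈ X
    · have : k ≤ (res I).card := (Finset.mem_filter.mp hI).2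
      obtain ⟨C, hC1, hC2⟩ := Finset.exists_subset_card_eq this
      exact ⟨C, fun _ => ⟨hC1, hC2⟩⟩
    · exact ⟨∅, fun h => absurd h hI⟩
  choose f hf using hch
  have hmaps : ∀ I ∈ X, f I ∈ Finset.powersetCard k (Finset.range K) := by
    intro I hI
    obtain ⟨h1, h2⟩ := hf I hI
    refine Finset.mem_powersetCard.mpr ⟨?_, h2⟩
    refine h1.trans ?_
    intro x hx
    obtain ⟨p, _, rfl⟩ := Finset.mem_image.mp hx
    exact Finset.mem_range.mpr (Nat.mod_lt _ hK0)
  have hcard : (Finset.powersetCard k (Finset.range K)).card * (k - 1) < X.card := by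
    rw [Finset.card_powersetCard, Finset.card_range, mul_comm]
    exact hcon
  obtain ⟨C, hCmem, hCf⟩ := Finset.exists_lt_card_fiber_of_mul_lt_card_of_maps_to hmaps hcard
  have hCk : C.card = k := (Finset.mem_powersetCard.mp hCmem).2
  -- k blocks with the same residue set C
  obtain ⟨F, hFsub, hFcard⟩ := Finset.exists_subset_card_eq
    (show k ≤ (X.filter fun x => f x = C).card by omega)
  set e := F.orderIsoOfFin hFcard with he
  set cc := C.orderIsoOfFin hCk with hcc
  -- pick a 1 in block (e s, J) at residue column cc (σ s)
  have hpt : ∀ s : Fin k, ∃ p : ℕ × ℕ, p ∈ S ∧ p.1 / K = (e s : ℕ) ∧ p.2 / K = J ∧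
      p.2 % K = (cc (σ s) : ℕ) := by
    intro s
    have hmem := Finset.mem_filter.mp (hFsub (e s).2)
    have hIX : (e s : ℕ) ∈ X := hmem.1
    have hfC : f (e s : ℕ) = C := hmem.2
    have hsub : C ⊆ res (e s : ℕ) := hfC ▸ (hf _ hIX).1
    have : (cc (σ s) : ℕ) ∈ res (e s : ℕ) := hsub (cc (σ s)).2
    obtain ⟨p, hp, hpe⟩ := Finset.mem_image.mp this
    obtain ⟨hpS, hp1, hp2⟩ := Finset.mem_filter.mp hp
    exact ⟨p, hpS, hp1, hp2, hpe⟩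
  choose P hPS hP1 hP2 hP3 using hpt
  refine hA ⟨fun s => (P s).1, fun t => K * J + (cc t : ℕ), ?_, ?_, ?_⟩
  · intro s t hst
    have h1 : (e s : ℕ) < (e t : ℕ) := by
      exact_mod_cast (e.strictMono hst)
    have h2 := hP1 s; have h3 := hP1 t
    show (P s).1 < (P t).1
    exact Nat.lt_of_div_lt_div (c := K) (by omega)
  · intro s t hst
    have : (cc s : ℕ) < (cc t : ℕ) := by exact_mod_cast (cc.strictMono hst)
    show K * J + (cc s : ℕ) < K * J + (cc t : ℕ)
    omega
  · intro s
    have h := Nat.div_add_mod (P s).2 K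
    have h2 := hP2 s
    have h3 := hP3 s
    have : K * J + (cc (σ s) : ℕ) = (P s).2 := by rw [← h3, ← h2]; exact h
    show ((P s).1, K * J + (cc (σ s) : ℕ)) ∈ S
    rw [this]
    exact hPS s

lemma mt_swap {k : ℕ} (σ : Equiv.Perm (Fin k)) (S : Finset (ℕ × ℕ))
    (hA : MTAvoids σ S) : MTAvoids σ⁻¹ (S.image Prod.swap) := by
  rintro ⟨i, j, hi, hj, hmem⟩
  refine hA ⟨j, i, hj, hi, fun s => ?_⟩
  have h := hmem (σ s)
  simp only [Equiv.Perm.inv_def, Equiv.symm_apply_apply] at h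
  obtain ⟨p, hp, hpe⟩ := Finset.mem_image.mp h
  have hpeq : p = (j s, i (σ s)) := by
    have h2 := congrArg Prod.swap hpe
    simpa using h2
  rwa [hpeq] at hp

lemma mt_contract {k K : ℕ} (_hK : 0 < K) (σ : Equiv.Perm (Fin k)) (S : Finset (ℕ × ℕ))
    (hA : MTAvoids σ S) :
    MTAvoids σ (S.image fun p => (p.1 / K, p.2 / K)) := by
  rintro ⟨i, j, hi, hj, hmem⟩
  have hch : ∀ s : Fin k, ∃ p : ℕ × ℕ, p ∈ S ∧ p.1 / K = i s ∧ p.2 / K = j (σ s) := by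
    intro s
    obtain ⟨p, hp, hpe⟩ := Finset.mem_image.mp (hmem s)
    exact ⟨p, hp, congrArg Prod.fst hpe, congrArg Prod.snd hpe⟩
  choose P hPS hP1 hP2 using hch
  refine hA ⟨fun s => (P s).1, fun t => (P (σ.symm t)).2, ?_, ?_, fun s => ?_⟩
  · intro s t hst
    have := hi hst
    have h2 := hP1 s; have h3 := hP1 t
    show (P s).1 < (P t).1
    exact Nat.lt_of_div_lt_div (c := K) (by omega)
  · intro s t hst
    have h1 : j (σ (σ.symm s)) < j (σ (σ.symm t)) := by
      simp only [Equiv.apply_symm_apply]; exact hj hst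
    have h2 := hP2 (σ.symm s); have h3 := hP2 (σ.symm t)
    show (P (σ.symm s)).2 < (P (σ.symm t)).2
    exact Nat.lt_of_div_lt_div (c := K) (by omega)
  · show ((P s).1, (P (σ.symm (σ s))).2) ∈ S
    rw [Equiv.symm_apply_apply]
    simpa using hPS s

lemma mt_tall_bound {k : ℕ} (hk : 1 ≤ k) (σ : Equiv.Perm (Fin k)) (S : Finset (ℕ × ℕ))
    (hA : MTAvoids σ S) (m I : ℕ) :
    ((Finset.range m).filter fun J =>
      k ≤ ((S.filter fun p => p.1 / k^2 = I ∧ p.2 / k^2 = J).image fun p => p.1 % k^2).card).card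
      ≤ (k - 1) * (k^2).choose k := by
  have h := mt_wide_bound hk σ⁻¹ (S.image Prod.swap) (mt_swap σ S hA) m I
  refine le_trans (le_of_eq ?_) h
  congr 1
  apply Finset.filter_congr
  intro J _
  have himg : (((S.image Prod.swap).filter fun p => p.1 / k^2 = J ∧ p.2 / k^2 = I).image
      fun p => p.2 % k^2) = ((S.filter fun p => p.1 / k^2 = I ∧ p.2 / k^2 = J).image
      fun p => p.1 % k^2) := by
    ext x
    simp only [Finset.mem_image, Finset.mem_filter, Prod.exists]
    constructor
    · rintro ⟨a, b, ⟨⟨c, d, hcd, heq⟩, h1, h2⟩, rfl⟩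
      rw [Prod.swap_prod_mk, Prod.mk.injEq] at heq
      refine ⟨c, d, ⟨hcd, ?_, ?_⟩, ?_⟩
      · rw [heq.2]; exact h2
      · rw [heq.1]; exact h1
      · rw [heq.2]
    · rintro ⟨a, b, ⟨hab, h1, h2⟩, rfl⟩
      exact ⟨b, a, ⟨⟨a, b, hab, rfl⟩, h2, h1⟩, rfl⟩
  rw [himg]

lemma mt_eq_of_div_mod {K a b : ℕ} (h1 : a / K = b / K) (h2 : a % K = b % K) : a = b := by
  conv_lhs => rw [← Nat.div_add_mod a K]
  conv_rhs => rw [← Nat.div_add_mod b K]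
  rw [h1, h2]

lemma mt_main {k : ℕ} (hk : 2 ≤ k) (σ : Equiv.Perm (Fin k)) :
    ∀ n : ℕ, ∀ S : Finset (ℕ × ℕ), (∀ p ∈ S, p.1 < n ∧ p.2 < n) →
      MTAvoids σ S → S.card ≤ k^4 * (k^2).choose k * n := by
  have hk1 : 1 ≤ k := by omega
  set B := (k^2).choose k with hB
  have hB1 : 1 ≤ B := Nat.choose_pos (Nat.le_self_pow two_ne_zero k)
  set c := k^4 * B with hc
  intro n
  induction n using Nat.strong_induction_on with
  | _ n ih =>
  intro S hSsub hA
  by_cases hsmall : n ≤ k^4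
  · -- small case: S.card ≤ n * n ≤ k^4 * n ≤ c * n
    have h1 : S.card ≤ n * n := by
      have : S ⊆ Finset.range n ×ˢ Finset.range n := by
        intro p hp
        exact Finset.mem_product.mpr ⟨Finset.mem_range.mpr (hSsub p hp).1,
          Finset.mem_range.mpr (hSsub p hp).2⟩
      calc S.card ≤ (Finset.range n ×ˢ Finset.range n).card := Finset.card_le_card this
        _ = n * n := by rw [Finset.card_product, Finset.card_range]
    calc S.card ≤ n * n := h1
      _ ≤ k^4 * n := Nat.mul_le_mul_right n hsmall
      _ ≤ c * n := Nat.mul_le_mul_right n (Nat.le_mul_of_pos_right _ hB1)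
  · push_neg at hsmall
    set K := k^2 with hKdef
    have hK0 : 0 < K := by positivity
    have hK4 : 4 ≤ K := by
      have : 2 * 2 ≤ k * k := Nat.mul_le_mul hk hk
      calc 4 = 2 * 2 := rfl
        _ ≤ k * k := this
        _ = K := (sq k).symm
    have hKK : K * K = k^4 := by rw [hKdef]; ring
    set m := (n + (K - 1)) / K with hm
    have hdm : K * m + (n + (K - 1)) % K = n + (K - 1) := by
      rw [hm]; exact Nat.div_add_mod _ _
    have hmod := Nat.mod_lt (n + (K - 1)) hK0
    have hub : K * m ≤ n + (K - 1) := by omega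
    have hlb : n ≤ K * m := by omega
    have hlb' : n ≤ m * K := by rw [mul_comm]; exact hlb
    have hKsq : K ≤ K * K := Nat.le_mul_of_pos_left K hK0
    have hmK : K ≤ m := by
      rcases Nat.lt_or_ge m K with h | h
      · exfalso
        have : K * m ≤ K * (K - 1) := Nat.mul_le_mul_left K (by omega)
        have h2 : K * (K - 1) ≤ K * K := Nat.mul_le_mul_left K (by omega)
        omega
      · exact h
    have hmn : m < n := by
      rcases Nat.lt_or_ge m n with h | h
      · exact h
      · exfalso
        have h1 : K * n ≤ K * m := Nat.mul_le_mul_left K h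
        have h2 : 4 * n ≤ K * n := Nat.mul_le_mul_right n hK4
        omega
    -- fibers
    set f : ℕ × ℕ → ℕ × ℕ := fun p => (p.1 / K, p.2 / K) with hf
    have hmapsto : ∀ p ∈ S, f p ∈ Finset.range m ×ˢ Finset.range m := by
      intro p hp
      obtain ⟨h1, h2⟩ := hSsub p hp
      refine Finset.mem_product.mpr ⟨Finset.mem_range.mpr ?_, Finset.mem_range.mpr ?_⟩
      · exact (Nat.div_lt_iff_lt_mul hK0).mpr (by omega)
      · exact (Nat.div_lt_iff_lt_mul hK0).mpr (by omega)
    have hsum := Finset.card_eq_sum_card_fiberwise hmapsto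
    -- the block of q
    set blk : ℕ × ℕ → Finset (ℕ × ℕ) := fun q => S.filter fun p => f p = q with hblk
    -- pointwise bound
    have hpt : ∀ q ∈ Finset.range m ×ˢ Finset.range m,
        (blk q).card ≤
          k^4 * (if k ≤ ((blk q).image fun p => p.2 % K).card then 1 else 0)
        + k^4 * (if k ≤ ((blk q).image fun p => p.1 % K).card then 1 else 0)
        + (k-1)^2 * (if (blk q).Nonempty then 1 else 0) := by
      intro q _
      by_cases hw : k ≤ ((blk q).image fun p => p.2 % K).card
      · -- crude bound K * K
        have : (blk q).card ≤ k^4 := by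
          rw [← hKK]
          have : (blk q).card ≤ (Finset.range K ×ˢ Finset.range K).card := by
            apply Finset.card_le_card_of_injOn (fun p => (p.1 % K, p.2 % K))
            · intro p _
              exact Finset.mem_product.mpr ⟨Finset.mem_range.mpr (Nat.mod_lt _ hK0),
                Finset.mem_range.mpr (Nat.mod_lt _ hK0)⟩
            · intro p hp p' hp' he
              have e1 : p.1 / K = q.1 := congrArg Prod.fst ((Finset.mem_filter.mp hp).2)
              have e2 : p.2 / K = q.2 := congrArg Prod.snd ((Finset.mem_filter.mp hp).2)
              have e1' : p'.1 / K = q.1 := congrArg Prod.fst ((Finset.mem_filter.mp hp').2)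
              have e2' : p'.2 / K = q.2 := congrArg Prod.snd ((Finset.mem_filter.mp hp').2)
              have m1 : p.1 % K = p'.1 % K := congrArg Prod.fst he
              have m2 : p.2 % K = p'.2 % K := congrArg Prod.snd he
              exact Prod.ext (mt_eq_of_div_mod (e1.trans e1'.symm) m1)
                (mt_eq_of_div_mod (e2.trans e2'.symm) m2)
          rw [Finset.card_product, Finset.card_range] at this
          exact this
        rw [if_pos hw]
        calc (blk q).card ≤ k^4 := this
          _ ≤ k^4 * 1 + k^4 * (if k ≤ ((blk q).image fun p => p.1 % K).card then 1 else 0) := by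
            rw [Nat.mul_one]; exact Nat.le_add_right _ _
          _ ≤ _ := Nat.le_add_right _ _
      · by_cases ht : k ≤ ((blk q).image fun p => p.1 % K).card
        · have : (blk q).card ≤ k^4 := by
            rw [← hKK]
            have : (blk q).card ≤ (Finset.range K ×ˢ Finset.range K).card := by
              apply Finset.card_le_card_of_injOn (fun p => (p.1 % K, p.2 % K))
              · intro p _
                exact Finset.mem_product.mpr ⟨Finset.mem_range.mpr (Nat.mod_lt _ hK0),
                  Finset.mem_range.mpr (Nat.mod_lt _ hK0)⟩
              · intro p hp p' hp' he
                have e1 : p.1 / K = q.1 := congrArg Prod.fst ((Finset.mem_filter.mp hp).2)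
                have e2 : p.2 / K = q.2 := congrArg Prod.snd ((Finset.mem_filter.mp hp).2)
                have e1' : p'.1 / K = q.1 := congrArg Prod.fst ((Finset.mem_filter.mp hp').2)
                have e2' : p'.2 / K = q.2 := congrArg Prod.snd ((Finset.mem_filter.mp hp').2)
                have m1 : p.1 % K = p'.1 % K := congrArg Prod.fst he
                have m2 : p.2 % K = p'.2 % K := congrArg Prod.snd he
                exact Prod.ext (mt_eq_of_div_mod (e1.trans e1'.symm) m1)
                  (mt_eq_of_div_mod (e2.trans e2'.symm) m2)
            rw [Finset.card_product, Finset.card_range] at this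
            exact this
          rw [if_neg hw, if_pos ht]
          calc (blk q).card ≤ k^4 := this
            _ = k^4 * 0 + k^4 * 1 := by ring
            _ ≤ _ := Nat.le_add_right _ _
        · -- neither wide nor tall
          by_cases hz : (blk q).Nonempty
          · have hbound : (blk q).card ≤ (k-1) * (k-1) := by
              have : (blk q).card ≤ (((blk q).image fun p => p.1 % K) ×ˢ
                  ((blk q).image fun p => p.2 % K)).card := by
                apply Finset.card_le_card_of_injOn (fun p => (p.1 % K, p.2 % K))
                · intro p hp
                  exact Finset.mem_product.mpr ⟨Finset.mem_image.mpr ⟨p, hp, rfl⟩,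
                    Finset.mem_image.mpr ⟨p, hp, rfl⟩⟩
                · intro p hp p' hp' he
                  have e1 : p.1 / K = q.1 := congrArg Prod.fst ((Finset.mem_filter.mp hp).2)
                  have e2 : p.2 / K = q.2 := congrArg Prod.snd ((Finset.mem_filter.mp hp).2)
                  have e1' : p'.1 / K = q.1 := congrArg Prod.fst ((Finset.mem_filter.mp hp').2)
                  have e2' : p'.2 / K = q.2 := congrArg Prod.snd ((Finset.mem_filter.mp hp').2)
                  have m1 : p.1 % K = p'.1 % K := congrArg Prod.fst he
                  have m2 : p.2 % K = p'.2 % K := congrArg Prod.snd he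
                  exact Prod.ext (mt_eq_of_div_mod (e1.trans e1'.symm) m1)
                    (mt_eq_of_div_mod (e2.trans e2'.symm) m2)
              rw [Finset.card_product] at this
              push_neg at hw ht
              calc (blk q).card ≤ _ := this
                _ ≤ (k-1) * (k-1) := Nat.mul_le_mul (by omega) (by omega)
            rw [if_neg hw, if_neg ht, if_pos hz]
            calc (blk q).card ≤ (k-1) * (k-1) := hbound
              _ = k^4 * 0 + k^4 * 0 + (k-1)^2 * 1 := by ring
              _ ≤ _ := le_rfl
          · have : (blk q).card = 0 := by
              rw [Finset.card_eq_zero]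
              exact Finset.not_nonempty_iff_eq_empty.mp hz
            omega
    -- sum the wide indicator
    have hwide : (∑ q ∈ Finset.range m ×ˢ Finset.range m,
        if k ≤ ((blk q).image fun p => p.2 % K).card then 1 else 0) ≤ m * ((k-1) * B) := by
      rw [Finset.sum_product, Finset.sum_comm]
      calc (∑ J ∈ Finset.range m, ∑ I ∈ Finset.range m,
            if k ≤ ((blk (I, J)).image fun p => p.2 % K).card then 1 else 0)
          ≤ ∑ _J ∈ Finset.range m, (k-1) * B := by
            apply Finset.sum_le_sum
            intro J _
            have heqblk : ∀ I : ℕ, blk (I, J) = S.filter fun p => p.1 / K = I ∧ p.2 / K = J := by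
              intro I
              apply Finset.filter_congr
              intro p _
              show f p = (I, J) ↔ _
              rw [hf]
              simp [Prod.ext_iff]
            have hcf : (∑ I ∈ Finset.range m,
                if k ≤ ((blk (I, J)).image fun p => p.2 % K).card then 1 else 0)
                = ((Finset.range m).filter fun I =>
                    k ≤ ((S.filter fun p => p.1 / K = I ∧ p.2 / K = J).image
                      fun p => p.2 % K).card).card := by
              rw [Finset.card_filter]
              apply Finset.sum_congr rfl
              intro I _
              rw [heqblk I]
            rw [hcf]
            exact mt_wide_bound (by omega) σ S hA m J
        _ = m * ((k-1) * B) := by rw [Finset.sum_const, Finset.card_range, smul_eq_mul]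
    -- sum the tall indicator
    have htall : (∑ q ∈ Finset.range m ×ˢ Finset.range m,
        if k ≤ ((blk q).image fun p => p.1 % K).card then 1 else 0) ≤ m * ((k-1) * B) := by
      rw [Finset.sum_product]
      calc (∑ I ∈ Finset.range m, ∑ J ∈ Finset.range m,
            if k ≤ ((blk (I, J)).image fun p => p.1 % K).card then 1 else 0)
          ≤ ∑ _I ∈ Finset.range m, (k-1) * B := by
            apply Finset.sum_le_sum
            intro I _
            have heqblk : ∀ J : ℕ, blk (I, J) = S.filter fun p => p.1 / K = I ∧ p.2 / K = J := by
              intro J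
              apply Finset.filter_congr
              intro p _
              show f p = (I, J) ↔ _
              rw [hf]
              simp [Prod.ext_iff]
            have hcf : (∑ J ∈ Finset.range m,
                if k ≤ ((blk (I, J)).image fun p => p.1 % K).card then 1 else 0)
                = ((Finset.range m).filter fun J =>
                    k ≤ ((S.filter fun p => p.1 / K = I ∧ p.2 / K = J).image
                      fun p => p.1 % K).card).card := by
              rw [Finset.card_filter]
              apply Finset.sum_congr rfl
              intro J _
              rw [heqblk J]
            rw [hcf]
            exact mt_tall_bound (by omega) σ S hA m I
        _ = m * ((k-1) * B) := by rw [Finset.sum_const, Finset.card_range, smul_eq_mul]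
    -- sum the nonzero indicator: induction hypothesis
    have hnz : (∑ q ∈ Finset.range m ×ˢ Finset.range m,
        if (blk q).Nonempty then 1 else 0) ≤ c * m := by
      rw [← Finset.card_filter]
      have himage : ((Finset.range m ×ˢ Finset.range m).filter fun q => (blk q).Nonempty)
          = S.image f := by
        ext q
        simp only [Finset.mem_filter, Finset.mem_image]
        constructor
        · rintro ⟨hq, p, hp⟩
          have hm2 := Finset.mem_filter.mp hp
          exact ⟨p, hm2.1, hm2.2⟩
        · rintro ⟨p, hpS, rfl⟩
          exact ⟨hmapsto p hpS, p, Finset.mem_filter.mpr ⟨hpS, rfl⟩⟩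
      rw [himage]
      apply ih m hmn (S.image f) ?_ (mt_contract hK0 σ S hA)
      intro q hq
      obtain ⟨p, hpS, rfl⟩ := Finset.mem_image.mp hq
      have hmem := Finset.mem_product.mp (hmapsto p hpS)
      exact ⟨Finset.mem_range.mp hmem.1, Finset.mem_range.mp hmem.2⟩
    -- put it together
    have h1 : S.card ≤ k^4 * (m * ((k-1) * B)) + k^4 * (m * ((k-1) * B)) + (k-1)^2 * (c * m) := by
      calc S.card = ∑ q ∈ Finset.range m ×ˢ Finset.range m, (blk q).card := hsum
        _ ≤ ∑ q ∈ Finset.range m ×ˢ Finset.range m,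
            (k^4 * (if k ≤ ((blk q).image fun p => p.2 % K).card then 1 else 0)
            + k^4 * (if k ≤ ((blk q).image fun p => p.1 % K).card then 1 else 0)
            + (k-1)^2 * (if (blk q).Nonempty then 1 else 0)) := Finset.sum_le_sum hpt
        _ = k^4 * (∑ q ∈ Finset.range m ×ˢ Finset.range m,
              if k ≤ ((blk q).image fun p => p.2 % K).card then 1 else 0)
            + k^4 * (∑ q ∈ Finset.range m ×ˢ Finset.range m,
              if k ≤ ((blk q).image fun p => p.1 % K).card then 1 else 0)
            + (k-1)^2 * (∑ q ∈ Finset.range m ×ˢ Finset.range m,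
              if (blk q).Nonempty then 1 else 0) := by
            rw [Finset.sum_add_distrib, Finset.sum_add_distrib, Finset.mul_sum,
              Finset.mul_sum, Finset.mul_sum]
        _ ≤ _ := add_le_add (add_le_add (Nat.mul_le_mul_left _ hwide)
            (Nat.mul_le_mul_left _ htall)) (Nat.mul_le_mul_left _ hnz)
    have key : k^4 * (m * ((k-1) * B)) + k^4 * (m * ((k-1) * B)) + (k-1)^2 * (c * m) + c * m
        = c * (K * m) := by
      rw [hc, hKdef]
      generalize hg : k - 1 = a
      have hka : k = a + 1 := by omega
      rw [hka]
      ring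
    have h2 : c * (K * m) ≤ c * n + c * (K - 1) := by
      calc c * (K * m) ≤ c * (n + (K - 1)) := Nat.mul_le_mul_left c hub
        _ = c * n + c * (K - 1) := Nat.mul_add c n (K - 1)
    have h3 : c * (K - 1) ≤ c * m := Nat.mul_le_mul_left c (by omega)
    omega

/-- Marcus–Tardos (Füredi–Hajnal conjecture): for every permutation `σ` of
`{1,…,k}` there is `c > 0` such that every `n × n` 0-1 matrix with more than
`c·n` ones contains the permutation matrix of `σ`. -/
theorem marcus_tardos (k : ℕ) (hk : 1 ≤ k) (σ : Equiv.Perm (Fin k)) :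
    ∃ c : ℝ, 0 < c ∧ ∀ n : ℕ, ∀ M : Fin n → Fin n → Bool,
      c * (n : ℝ) < ((Finset.univ.filter fun p : Fin n × Fin n => M p.1 p.2 = true).card : ℝ) →
      ∃ (i : Fin k → Fin n) (j : Fin k → Fin n), StrictMono i ∧ StrictMono j ∧
        ∀ s : Fin k, M (i s) (j (σ s)) = true := by
  by_cases hk2 : 2 ≤ k
  · set C : ℕ := k^4 * (k^2).choose k with hC
    have hC0 : 0 < C := by
      apply Nat.mul_pos (by positivity)
      exact Nat.choose_pos (Nat.le_self_pow two_ne_zero k)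
    refine ⟨(C : ℝ), by exact_mod_cast hC0, ?_⟩
    intro n M hcard
    set S : Finset (ℕ × ℕ) :=
      (Finset.univ.filter fun p : Fin n × Fin n => M p.1 p.2 = true).image
        (fun p => ((p.1 : ℕ), (p.2 : ℕ))) with hS
    have hScard : S.card = (Finset.univ.filter fun p : Fin n × Fin n => M p.1 p.2 = true).card := by
      apply Finset.card_image_of_injective
      intro p q hpq
      have h1 : (p.1 : ℕ) = q.1 := congrArg Prod.fst hpq
      have h2 : (p.2 : ℕ) = q.2 := congrArg Prod.snd hpq
      exact Prod.ext (Fin.ext h1) (Fin.ext h2)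
    have hSsub : ∀ p ∈ S, p.1 < n ∧ p.2 < n := by
      intro p hp
      obtain ⟨q, _, rfl⟩ := Finset.mem_image.mp hp
      exact ⟨q.1.isLt, q.2.isLt⟩
    have hnotA : ¬ MTAvoids σ S := by
      intro hA
      have := mt_main hk2 σ n S hSsub hA
      rw [hScard] at this
      have hcast : ((Finset.univ.filter fun p : Fin n × Fin n => M p.1 p.2 = true).card : ℝ)
          ≤ (C : ℝ) * n := by exact_mod_cast this
      linarith
    rw [MTAvoids, not_not] at hnotA
    obtain ⟨i, j, hi, hj, hmem⟩ := hnotA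
    have hin : ∀ s, i s < n := fun s => (hSsub _ (hmem s)).1
    have hjn : ∀ t, j t < n := by
      intro t
      have := (hSsub _ (hmem (σ.symm t))).2
      simpa using this
    refine ⟨fun s => ⟨i s, hin s⟩, fun t => ⟨j t, hjn t⟩, ?_, ?_, ?_⟩
    · intro s t hst
      exact Fin.mk_lt_mk.mpr (hi hst)
    · intro s t hst
      exact Fin.mk_lt_mk.mpr (hj hst)
    · intro s
      have hm := hmem s
      rw [hS] at hm
      obtain ⟨q, hq, he⟩ := Finset.mem_image.mp hm
      have h1 : q.1 = (⟨i s, hin s⟩ : Fin n) := Fin.ext (congrArg Prod.fst he)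
      have h2 : q.2 = (⟨j (σ s), hjn (σ s)⟩ : Fin n) := Fin.ext (congrArg Prod.snd he)
      have := (Finset.mem_filter.mp hq).2
      rwa [h1, h2] at this
  · -- k = 1
    have hk1 : k = 1 := by omega
    refine ⟨1, one_pos, ?_⟩
    intro n M hcard
    have hpos : 0 < (Finset.univ.filter fun p : Fin n × Fin n => M p.1 p.2 = true).card := by
      by_contra h
      push_neg at h
      have h0 : (Finset.univ.filter fun p : Fin n × Fin n => M p.1 p.2 = true).card = 0 := by omega
      rw [h0] at hcard
      push_cast at hcard
      have : (0:ℝ) ≤ (n:ℝ) := Nat.cast_nonneg n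
      linarith
    obtain ⟨p, hp⟩ := Finset.card_pos.mp hpos
    subst hk1
    refine ⟨fun _ => p.1, fun _ => p.2, ?_, ?_, ?_⟩
    · intro s t hst
      exact absurd (Subsingleton.elim s t) (ne_of_lt hst)
    · intro s t hst
      exact absurd (Subsingleton.elim s t) (ne_of_lt hst)
    · intro s
      exact (Finset.mem_filter.mp hp).2
end
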